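/- arXiv:0707.3619 — 4 statements merged into one kernel-verified Lean document; each statement's English description precedes it below -/
import Mathlib

section
/- The distance product of two Monge matrices is Monge: if A, B are Monge matrices of compatible dimensions and C(i,k) = min_j (A(i,j) + B(j,k)), then C is Monge. -/
def IsMonge {a b : ℕ} (A : Fin a → Fin b → ℤ) : Prop :=
  ∀ i i' : Fin a, ∀ j j' : Fin b, i ≤ i' → j ≤ j' → A i j + A i' j' ≤ A i j' + A i' j

/-- The matrix distance product `C(i,k) = min_j (A(i,j) + B(j,k))`. -/
def distProd {a b c : ℕ} (A : Fin a → Fin (b+1) → ℤ) (B : Fin (b+1) → Fin c → ℤ)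
    (i : Fin a) (k : Fin c) : ℤ :=
  Finset.univ.inf' Finset.univ_nonempty (fun j => A i j + B j k)

/-- the distance product of two Monge matrices is Monge. -/
theorem distProd_monge {a b c : ℕ} (A : Fin a → Fin (b+1) → ℤ) (B : Fin (b+1) → Fin c → ℤ)
    (hA : IsMonge A) (hB : IsMonge B) :
    IsMonge (fun i k => distProd A B i k) := by
  intro i i' k k' hi hk
  simp only
  obtain ⟨j, -, hj⟩ := Finset.exists_mem_eq_inf' (Finset.univ_nonempty) (fun j => A i j + B j k')
  obtain ⟨j', -, hj'⟩ := Finset.exists_mem_eq_inf' (Finset.univ_nonempty) (fun j => A i' j + B j k)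
  have h1 : distProd A B i k' = A i j + B j k' := hj
  have h2 : distProd A B i' k = A i' j' + B j' k := hj'
  rw [h1, h2]
  rcases le_total j j' with h | h
  · have c1 : distProd A B i k ≤ A i j + B j k := Finset.inf'_le _ (Finset.mem_univ j)
    have c2 : distProd A B i' k' ≤ A i' j' + B j' k' := Finset.inf'_le _ (Finset.mem_univ j')
    have := hB j j' k k' h hk
    linarith
  · have c1 : distProd A B i k ≤ A i j' + B j' k := Finset.inf'_le _ (Finset.mem_univ j')
    have c2 : distProd A B i' k' ≤ A i' j + B j k' := Finset.inf'_le _ (Finset.mem_univ j)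
    have := hA i i' j' j hi h
    linarith
end

section
/- Dot criterion for Bruhat order: a permutation matrix P_A is below permutation matrix P_B in the Bruhat order if and only if P_A^Σ(i,j) ≤ P_B^Σ(i,j) for all i, j. -/
def PermMat {n : ℕ} (σ : Equiv.Perm (Fin n)) : Fin n → Fin n → ℤ :=
  fun i j => if σ i = j then 1 else 0

def distSum {m n : ℕ} (D : Fin m → Fin n → ℤ) (i : Fin (m+1)) (j : Fin (n+1)) : ℤ :=
  ∑ p : Fin m, ∑ q : Fin n, if (i : ℕ) ≤ (p : ℕ) ∧ (q : ℕ) < (j : ℕ) then D p q else 0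

/-- A single Bruhat step: a `2×2` submatrix of the form `[[1,0],[0,1]]`
(on rows `i < i'` and columns `j < j'`) is replaced by `[[0,1],[1,0]]`,
all other entries being unchanged. -/
def BruhatStep {n : ℕ} (P Q : Fin n → Fin n → ℤ) : Prop :=
  ∃ i i' j j' : Fin n, i < i' ∧ j < j' ∧
    P i j = 1 ∧ P i j' = 0 ∧ P i' j = 0 ∧ P i' j' = 1 ∧
    Q i j = 0 ∧ Q i j' = 1 ∧ Q i' j = 1 ∧ Q i' j' = 0 ∧
    (∀ a b : Fin n, ¬ ((a = i ∨ a = i') ∧ (b = j ∨ b = j')) → Q a b = P a b)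

/-- `P` is below `Q` in the Bruhat order: `P` can be transformed into `Q`
by a sequence of Bruhat steps. -/
def Bruhat {n : ℕ} (P Q : Fin n → Fin n → ℤ) : Prop :=
  Relation.ReflTransGen BruhatStep P Q


namespace BruhatAux

variable {n : ℕ}

def lc (x : Equiv.Perm (Fin n)) (u v : ℕ) : ℕ :=
  ∑ p : Fin n, if (p : ℕ) < u ∧ ((x p : Fin n) : ℕ) < v then 1 else 0

def mid (x : Equiv.Perm (Fin n)) (u1 u2 v : ℕ) : ℕ :=
  ∑ p : Fin n, if u1 ≤ (p : ℕ) ∧ (p : ℕ) < u2 ∧ ((x p : Fin n) : ℕ) < v then 1 else 0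

lemma lc_split (x : Equiv.Perm (Fin n)) {u1 u2 : ℕ} (h : u1 ≤ u2) (v : ℕ) :
    lc x u2 v = lc x u1 v + mid x u1 u2 v := by
  unfold lc mid
  rw [← Finset.sum_add_distrib]
  refine Finset.sum_congr rfl fun p _ => ?_
  split_ifs <;> omega

lemma lc_succ (x : Equiv.Perm (Fin n)) (t : Fin n) (v : ℕ) :
    lc x ((t:ℕ)+1) v = lc x (t:ℕ) v + (if ((x t : Fin n) : ℕ) < v then 1 else 0) := by
  rw [lc_split x (Nat.le_succ (t:ℕ)) v]
  congr 1
  unfold mid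
  have hpt : ∀ p : Fin n,
      (if (t:ℕ) ≤ (p:ℕ) ∧ (p:ℕ) < (t:ℕ)+1 ∧ ((x p : Fin n):ℕ) < v then 1 else 0)
      = (if p = t then (if ((x p : Fin n):ℕ) < v then (1:ℕ) else 0) else 0) := by
    intro p
    by_cases hp : p = t
    · subst hp; simp
    · have : (p:ℕ) ≠ (t:ℕ) := fun hc => hp (Fin.ext hc)
      rw [if_neg hp, if_neg (by omega)]
  simp_rw [hpt]
  rw [Finset.sum_ite_eq' Finset.univ t]
  simp

lemma sum_indicator_lt (x : Equiv.Perm (Fin n)) {j : ℕ} (hj : j ≤ n) :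
    ∑ p : Fin n, (if ((x p : Fin n):ℕ) < j then (1:ℤ) else 0) = j := by
  rw [Equiv.sum_comp x (fun q : Fin n => if (q:ℕ) < j then (1:ℤ) else 0)]
  rw [Fin.sum_univ_eq_sum_range (fun q => if q < j then (1:ℤ) else 0) n]
  rw [← Finset.sum_subset (Finset.range_subset_range.mpr hj)
    (by intro q hq hq'; simp only [Finset.mem_range] at hq'; rw [if_neg (by omega)])]
  rw [Finset.sum_congr rfl (fun q hq => by
    simp only [Finset.mem_range] at hq; rw [if_pos hq])]
  simp

lemma distSum_permMat (x : Equiv.Perm (Fin n)) (i j : Fin (n+1)) :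
    distSum (PermMat x) i j = (j:ℤ) - (lc x (i:ℕ) (j:ℕ) : ℕ) := by
  unfold distSum PermMat
  have inner : ∀ p : Fin n,
      (∑ q : Fin n, if (i:ℕ) ≤ (p:ℕ) ∧ (q:ℕ) < (j:ℕ) then (if x p = q then (1:ℤ) else 0) else 0)
      = if (i:ℕ) ≤ (p:ℕ) ∧ ((x p : Fin n):ℕ) < (j:ℕ) then 1 else 0 := by
    intro p
    have hq : ∀ q : Fin n,
        (if (i:ℕ) ≤ (p:ℕ) ∧ (q:ℕ) < (j:ℕ) then (if x p = q then (1:ℤ) else 0) else 0)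
        = if x p = q then (if (i:ℕ) ≤ (p:ℕ) ∧ ((x p : Fin n):ℕ) < (j:ℕ) then (1:ℤ) else 0) else 0 := by
      intro q
      by_cases h : x p = q
      · subst h; simp
      · simp [h]
    simp_rw [hq]
    rw [Finset.sum_ite_eq]
    simp
  simp_rw [inner]
  have hcast : ((lc x (i:ℕ) (j:ℕ) : ℕ) : ℤ)
      = ∑ p : Fin n, (if (p:ℕ) < (i:ℕ) ∧ ((x p : Fin n):ℕ) < (j:ℕ) then (1:ℤ) else 0) := by
    unfold lc
    push_cast
    rfl
  have hsplit : (∑ p : Fin n, (if (i:ℕ) ≤ (p:ℕ) ∧ ((x p : Fin n):ℕ) < (j:ℕ) then (1:ℤ) else 0))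
      + (∑ p : Fin n, (if (p:ℕ) < (i:ℕ) ∧ ((x p : Fin n):ℕ) < (j:ℕ) then (1:ℤ) else 0))
      = (j:ℤ) := by
    rw [← Finset.sum_add_distrib]
    have hpt : ∀ p : Fin n,
        (if (i:ℕ) ≤ (p:ℕ) ∧ ((x p : Fin n):ℕ) < (j:ℕ) then (1:ℤ) else 0)
        + (if (p:ℕ) < (i:ℕ) ∧ ((x p : Fin n):ℕ) < (j:ℕ) then (1:ℤ) else 0)
        = if ((x p : Fin n):ℕ) < (j:ℕ) then (1:ℤ) else 0 := by
      intro p; split_ifs <;> omega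
    rw [Finset.sum_congr rfl (fun p _ => hpt p)]
    exact sum_indicator_lt x (Nat.lt_succ_iff.mp j.isLt)
  rw [hcast]
  linarith

lemma step_distSum {P Q : Fin n → Fin n → ℤ} {i i' j j' : Fin n}
    (hii : i < i') (hjj : j < j')
    (h1 : P i j = 1) (h2 : P i j' = 0) (h3 : P i' j = 0) (h4 : P i' j' = 1)
    (h5 : Q i j = 0) (h6 : Q i j' = 1) (h7 : Q i' j = 1) (h8 : Q i' j' = 0)
    (h9 : ∀ a b : Fin n, ¬ ((a = i ∨ a = i') ∧ (b = j ∨ b = j')) → Q a b = P a b)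
    (i0 j0 : Fin (n+1)) :
    distSum Q i0 j0 = distSum P i0 j0 +
      (if (i:ℕ) < (i0:ℕ) ∧ (i0:ℕ) ≤ (i':ℕ) ∧ (j:ℕ) < (j0:ℕ) ∧ (j0:ℕ) ≤ (j':ℕ)
        then 1 else 0) := by
  have hiine : i ≠ i' := ne_of_lt hii
  have hjjne : j ≠ j' := ne_of_lt hjj
  set e : Fin n → Fin n → ℤ :=
    fun p q => if (i0:ℕ) ≤ (p:ℕ) ∧ (q:ℕ) < (j0:ℕ) then Q p q - P p q else 0 with he
  have key : distSum Q i0 j0 - distSum P i0 j0 = ∑ p : Fin n, ∑ q : Fin n, e p q := by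
    unfold distSum
    rw [← Finset.sum_sub_distrib]
    refine Finset.sum_congr rfl fun p _ => ?_
    rw [← Finset.sum_sub_distrib]
    refine Finset.sum_congr rfl fun q _ => ?_
    simp only [he]
    split_ifs <;> ring
  have hrowzero : ∀ p : Fin n, p ∉ ({i, i'} : Finset (Fin n)) → (∑ q : Fin n, e p q) = 0 := by
    intro p hp
    simp only [Finset.mem_insert, Finset.mem_singleton, not_or] at hp
    refine Finset.sum_eq_zero fun q _ => ?_
    have hQP : Q p q = P p q := h9 p q (by tauto)
    simp only [he, hQP, sub_self, ite_self]
  have hcolzero : ∀ r : Fin n, ∀ q : Fin n, q ∉ ({j, j'} : Finset (Fin n)) →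
      (r = i ∨ r = i') → e r q = 0 := by
    intro r q hq hr
    simp only [Finset.mem_insert, Finset.mem_singleton, not_or] at hq
    have hQP : Q r q = P r q := h9 r q (by tauto)
    simp only [he, hQP, sub_self, ite_self]
  have hrowsum : ∀ r : Fin n, (r = i ∨ r = i') → (∑ q : Fin n, e r q) = e r j + e r j' := by
    intro r hr
    rw [← Finset.sum_subset (Finset.subset_univ ({j, j'} : Finset (Fin n)))
      (fun q _ hq => hcolzero r q hq hr)]
    rw [Finset.sum_pair hjjne]
  have htotal : (∑ p : Fin n, ∑ q : Fin n, e p q) = e i j + e i j' + (e i' j + e i' j') := by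
    rw [← Finset.sum_subset (Finset.subset_univ ({i, i'} : Finset (Fin n)))
      (fun p _ hp => hrowzero p hp)]
    rw [Finset.sum_pair hiine, hrowsum i (Or.inl rfl), hrowsum i' (Or.inr rfl)]
  have hvals : e i j = (if (i0:ℕ) ≤ (i:ℕ) ∧ ((j:Fin n):ℕ) < (j0:ℕ) then (0:ℤ) - 1 else 0) ∧
      e i j' = (if (i0:ℕ) ≤ (i:ℕ) ∧ ((j':Fin n):ℕ) < (j0:ℕ) then (1:ℤ) - 0 else 0) ∧
      e i' j = (if (i0:ℕ) ≤ (i':ℕ) ∧ ((j:Fin n):ℕ) < (j0:ℕ) then (1:ℤ) - 0 else 0) ∧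
      e i' j' = (if (i0:ℕ) ≤ (i':ℕ) ∧ ((j':Fin n):ℕ) < (j0:ℕ) then (0:ℤ) - 1 else 0) := by
    refine ⟨?_, ?_, ?_, ?_⟩ <;> simp only [he, h1, h2, h3, h4, h5, h6, h7, h8]
  obtain ⟨v1, v2, v3, v4⟩ := hvals
  have hiv : (i:ℕ) < (i':ℕ) := hii
  have hjv : (j:ℕ) < (j':ℕ) := hjj
  have : distSum Q i0 j0 - distSum P i0 j0 =
      (if (i:ℕ) < (i0:ℕ) ∧ (i0:ℕ) ≤ (i':ℕ) ∧ (j:ℕ) < (j0:ℕ) ∧ (j0:ℕ) ≤ (j':ℕ)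
        then 1 else 0) := by
    rw [key, htotal, v1, v2, v3, v4]
    split_ifs <;> omega
  linarith

lemma distSum_le_of_step {P Q : Fin n → Fin n → ℤ} (h : BruhatStep P Q) (i0 j0 : Fin (n+1)) :
    distSum P i0 j0 ≤ distSum Q i0 j0 := by
  obtain ⟨i, i', j, j', hii, hjj, h1, h2, h3, h4, h5, h6, h7, h8, h9⟩ := h
  rw [step_distSum hii hjj h1 h2 h3 h4 h5 h6 h7 h8 h9 i0 j0]
  split_ifs <;> linarith

lemma exists_kl {a b : Equiv.Perm (Fin n)} (hab : a ≠ b)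
    (hlc : ∀ u v : ℕ, u ≤ n → v ≤ n → lc b u v ≤ lc a u v) :
    ∃ k l : Fin n, (k:ℕ) < (l:ℕ) ∧ ((a k : Fin n):ℕ) < ((a l : Fin n):ℕ) ∧
      ∀ u v : ℕ, (k:ℕ) < u → u ≤ (l:ℕ) → ((a k : Fin n):ℕ) < v → v ≤ ((a l : Fin n):ℕ) →
        lc b u v < lc a u v := by
  classical
  have hs : (Finset.univ.filter (fun p : Fin n => a p ≠ b p)).Nonempty := by
    by_contra hcon
    rw [Finset.not_nonempty_iff_eq_empty, Finset.filter_eq_empty_iff] at hcon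
    exact hab (Equiv.ext fun p => by
      have := hcon (Finset.mem_univ p); simpa using this)
  set k := Finset.min' _ hs with hk_def
  have hk_mem := Finset.min'_mem _ hs
  rw [Finset.mem_filter] at hk_mem
  have hkab : a k ≠ b k := hk_mem.2
  have hk_min : ∀ p : Fin n, (p:ℕ) < (k:ℕ) → a p = b p := by
    intro p hp
    by_contra hne
    have hkp : k ≤ p := Finset.min'_le _ p (by simp [hne])
    have : (k:ℕ) ≤ (p:ℕ) := hkp
    omega
  have hkn : (k:ℕ) < n := k.isLt
  have hbkn : ((b k : Fin n):ℕ) < n := (b k).isLt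
  have hlck : ∀ v : ℕ, lc a (k:ℕ) v = lc b (k:ℕ) v := by
    intro v
    unfold lc
    refine Finset.sum_congr rfl fun p _ => ?_
    by_cases hp : (p:ℕ) < (k:ℕ)
    · rw [hk_min p hp]
    · simp [hp]
  have hakbkne : ((a k : Fin n):ℕ) ≠ ((b k : Fin n):ℕ) := fun hc => hkab (Fin.ext hc)
  have hakbk : ((a k : Fin n):ℕ) < ((b k : Fin n):ℕ) := by
    have h1 := hlc ((k:ℕ)+1) (((b k : Fin n):ℕ)+1) hkn hbkn
    rw [lc_succ a k, lc_succ b k, hlck] at h1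
    split_ifs at h1 <;> omega
  have hs2 : (Finset.univ.filter (fun p : Fin n =>
      (k:ℕ) < (p:ℕ) ∧ ((a k : Fin n):ℕ) < ((a p : Fin n):ℕ)
        ∧ ((a p : Fin n):ℕ) ≤ ((b k : Fin n):ℕ))).Nonempty := by
    refine ⟨a.symm (b k), ?_⟩
    simp only [Finset.mem_filter, Finset.mem_univ, true_and]
    have hval : a (a.symm (b k)) = b k := a.apply_symm_apply _
    refine ⟨?_, by rw [hval]; exact hakbk, by rw [hval]⟩
    by_contra hcon
    push_neg at hcon
    rcases Nat.lt_or_ge ((a.symm (b k) : Fin n):ℕ) (k:ℕ) with hlt | hge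
    · have heq := hk_min _ hlt
      have : b (a.symm (b k)) = b k := by rw [← heq, hval]
      have : a.symm (b k) = k := b.injective this
      omega
    · have : a.symm (b k) = k := Fin.ext (by omega)
      rw [this] at hval
      exact hkab hval
  set l := Finset.min' _ hs2 with hl_def
  have hl_mem := Finset.min'_mem _ hs2
  rw [Finset.mem_filter] at hl_mem
  obtain ⟨-, hkl, hakal, halbk⟩ := hl_mem
  have hl_min : ∀ p : Fin n, (k:ℕ) < (p:ℕ) → (p:ℕ) < (l:ℕ) →
      ¬(((a k : Fin n):ℕ) < ((a p : Fin n):ℕ) ∧ ((a p : Fin n):ℕ) ≤ ((b k : Fin n):ℕ)) := by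
    intro p hp1 hp2 hcon
    have hlp : l ≤ p := Finset.min'_le _ p (by
      simp only [Finset.mem_filter, Finset.mem_univ, true_and]
      exact ⟨hp1, hcon.1, hcon.2⟩)
    have : (l:ℕ) ≤ (p:ℕ) := hlp
    omega
  refine ⟨k, l, hkl, hakal, ?_⟩
  intro u v hu1 hu2 hv1 hv2
  have hvbk : v ≤ ((b k : Fin n):ℕ) := le_trans hv2 halbk
  have hdich : ∀ p : Fin n, (k:ℕ) < (p:ℕ) → (p:ℕ) < u →
      ((a p : Fin n):ℕ) < ((a k : Fin n):ℕ) ∨ ((b k : Fin n):ℕ) < ((a p : Fin n):ℕ) := by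
    intro p hp1 hp2
    have hnl := hl_min p hp1 (by omega)
    have hne : ((a p : Fin n):ℕ) ≠ ((a k : Fin n):ℕ) := by
      intro hc
      have : p = k := a.injective (Fin.ext hc)
      have : (p:ℕ) = (k:ℕ) := by rw [this]
      omega
    by_cases hlt : ((a k : Fin n):ℕ) < ((a p : Fin n):ℕ)
    · right; omega
    · left; omega
  have hukl : (k:ℕ)+1 ≤ u := hu1
  have expand : ∀ (x : Equiv.Perm (Fin n)) (w : ℕ),
      lc x u w = lc x (k:ℕ) w + (if ((x k : Fin n):ℕ) < w then 1 else 0)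
        + mid x ((k:ℕ)+1) u w := by
    intro x w
    rw [lc_split x hukl w, lc_succ x k w]
  have hma : mid a ((k:ℕ)+1) u v = mid a ((k:ℕ)+1) u (((b k : Fin n):ℕ)+1) := by
    unfold mid
    refine Finset.sum_congr rfl fun p _ => ?_
    by_cases hp : (k:ℕ)+1 ≤ (p:ℕ) ∧ (p:ℕ) < u
    · rcases hdich p (by omega) hp.2 with hlo | hhi
      · rw [if_pos ⟨hp.1, hp.2, by omega⟩, if_pos ⟨hp.1, hp.2, by omega⟩]
      · rw [if_neg (by omega), if_neg (by omega)]
    · rw [if_neg (by omega), if_neg (by omega)]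
  have hmb : mid b ((k:ℕ)+1) u v ≤ mid b ((k:ℕ)+1) u (((b k : Fin n):ℕ)+1) := by
    unfold mid
    refine Finset.sum_le_sum fun p _ => ?_
    split_ifs <;> omega
  have hun : u ≤ n := by have := l.isLt; omega
  have h2 := hlc u (((b k : Fin n):ℕ)+1) hun hbkn
  rw [expand a, expand b, hlck] at h2
  rw [if_pos (by omega : ((a k : Fin n):ℕ) < ((b k : Fin n):ℕ)+1),
    if_pos (by omega : ((b k : Fin n):ℕ) < ((b k : Fin n):ℕ)+1)] at h2
  have e1 := expand a v
  have e2 := expand b v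
  rw [hlck, if_pos hv1] at e1
  rw [if_neg (by omega : ¬ ((b k : Fin n):ℕ) < v)] at e2
  omega

lemma step_lemma {a b : Equiv.Perm (Fin n)} (hab : a ≠ b)
    (h : ∀ i j : Fin (n+1), distSum (PermMat a) i j ≤ distSum (PermMat b) i j) :
    ∃ a' : Equiv.Perm (Fin n),
      BruhatStep (PermMat a) (PermMat a') ∧
      (∀ i j : Fin (n+1), distSum (PermMat a') i j ≤ distSum (PermMat b) i j) ∧
      (∑ i : Fin (n+1), ∑ j : Fin (n+1), (distSum (PermMat b) i j - distSum (PermMat a') i j))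
        < ∑ i : Fin (n+1), ∑ j : Fin (n+1), (distSum (PermMat b) i j - distSum (PermMat a) i j) := by
  classical
  have hlc : ∀ u v : ℕ, u ≤ n → v ≤ n → lc b u v ≤ lc a u v := by
    intro u v hu hv
    have h0 := h ⟨u, Nat.lt_succ_of_le hu⟩ ⟨v, Nat.lt_succ_of_le hv⟩
    rw [distSum_permMat, distSum_permMat] at h0
    have : (lc b u v : ℤ) ≤ (lc a u v : ℤ) := by
      simp only [Fin.val_mk] at h0
      linarith
    exact_mod_cast this
  obtain ⟨k, l, hkl, hakal, hstrict⟩ := exists_kl hab hlc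
  have hklF : k < l := hkl
  have hakalF : a k < a l := hakal
  have hklne : k ≠ l := ne_of_lt hklF
  have hakalne : a k ≠ a l := ne_of_lt hakalF
  set a' := a * Equiv.swap k l with ha'
  have ha'k : a' k = a l := by
    rw [ha', Equiv.Perm.mul_apply, Equiv.swap_apply_left]
  have ha'l : a' l = a k := by
    rw [ha', Equiv.Perm.mul_apply, Equiv.swap_apply_right]
  have ha'o : ∀ p : Fin n, p ≠ k → p ≠ l → a' p = a p := by
    intro p h1 h2
    rw [ha', Equiv.Perm.mul_apply, Equiv.swap_apply_of_ne_of_ne h1 h2]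
  have e1 : PermMat a k (a k) = 1 := by unfold PermMat; rw [if_pos rfl]
  have e2 : PermMat a k (a l) = 0 := by unfold PermMat; rw [if_neg hakalne]
  have e3 : PermMat a l (a k) = 0 := by unfold PermMat; rw [if_neg hakalne.symm]
  have e4 : PermMat a l (a l) = 1 := by unfold PermMat; rw [if_pos rfl]
  have e5 : PermMat a' k (a k) = 0 := by unfold PermMat; rw [ha'k, if_neg hakalne.symm]
  have e6 : PermMat a' k (a l) = 1 := by unfold PermMat; rw [ha'k, if_pos rfl]
  have e7 : PermMat a' l (a k) = 1 := by unfold PermMat; rw [ha'l, if_pos rfl]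
  have e8 : PermMat a' l (a l) = 0 := by unfold PermMat; rw [ha'l, if_neg hakalne]
  have hoff : ∀ r c : Fin n, ¬ ((r = k ∨ r = l) ∧ (c = a k ∨ c = a l)) →
      PermMat a' r c = PermMat a r c := by
    intro r c hrc
    by_cases hr : r = k ∨ r = l
    · have hc : c ≠ a k ∧ c ≠ a l := by tauto
      rcases hr with rfl | rfl
      · unfold PermMat
        rw [ha'k, if_neg (fun hx => hc.2 hx.symm), if_neg (fun hx => hc.1 hx.symm)]
      · unfold PermMat
        rw [ha'l, if_neg (fun hx => hc.1 hx.symm), if_neg (fun hx => hc.2 hx.symm)]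
    · push_neg at hr
      unfold PermMat
      rw [ha'o r hr.1 hr.2]
  have hstep : BruhatStep (PermMat a) (PermMat a') :=
    ⟨k, l, a k, a l, hklF, hakalF, e1, e2, e3, e4, e5, e6, e7, e8, hoff⟩
  have hds := step_distSum hklF hakalF e1 e2 e3 e4 e5 e6 e7 e8 hoff
  have h' : ∀ i j : Fin (n+1), distSum (PermMat a') i j ≤ distSum (PermMat b) i j := by
    intro i0 j0
    rw [hds i0 j0]
    by_cases hc : (k:ℕ) < (i0:ℕ) ∧ (i0:ℕ) ≤ (l:ℕ) ∧ ((a k : Fin n):ℕ) < (j0:ℕ)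
        ∧ (j0:ℕ) ≤ ((a l : Fin n):ℕ)
    · rw [if_pos hc]
      have hstr := hstrict (i0:ℕ) (j0:ℕ) hc.1 hc.2.1 hc.2.2.1 hc.2.2.2
      have hA := distSum_permMat a i0 j0
      have hB := distSum_permMat b i0 j0
      have hcast : (lc b (i0:ℕ) (j0:ℕ) : ℤ) < (lc a (i0:ℕ) (j0:ℕ) : ℤ) := by
        exact_mod_cast hstr
      linarith
    · rw [if_neg hc, add_zero]
      exact h i0 j0
  refine ⟨a', hstep, h', ?_⟩
  have hsum : (∑ i : Fin (n+1), ∑ j : Fin (n+1),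
        (distSum (PermMat b) i j - distSum (PermMat a') i j))
      = (∑ i : Fin (n+1), ∑ j : Fin (n+1),
        (distSum (PermMat b) i j - distSum (PermMat a) i j))
      - ∑ i : Fin (n+1), ∑ j : Fin (n+1),
        (if (k:ℕ) < (i:ℕ) ∧ (i:ℕ) ≤ (l:ℕ) ∧ ((a k : Fin n):ℕ) < (j:ℕ)
          ∧ (j:ℕ) ≤ ((a l : Fin n):ℕ) then (1:ℤ) else 0) := by
    rw [← Finset.sum_sub_distrib]
    refine Finset.sum_congr rfl fun i _ => ?_
    rw [← Finset.sum_sub_distrib]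
    refine Finset.sum_congr rfl fun j _ => ?_
    rw [hds i j]
    ring
  have hnonneg : ∀ (i j : Fin (n+1)),
      (0:ℤ) ≤ (if (k:ℕ) < (i:ℕ) ∧ (i:ℕ) ≤ (l:ℕ) ∧ ((a k : Fin n):ℕ) < (j:ℕ)
          ∧ (j:ℕ) ≤ ((a l : Fin n):ℕ) then (1:ℤ) else 0) := by
    intro i j; split_ifs <;> norm_num
  have hinner : ∀ i : Fin (n+1), (0:ℤ) ≤ ∑ j : Fin (n+1),
      (if (k:ℕ) < (i:ℕ) ∧ (i:ℕ) ≤ (l:ℕ) ∧ ((a k : Fin n):ℕ) < (j:ℕ)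
          ∧ (j:ℕ) ≤ ((a l : Fin n):ℕ) then (1:ℤ) else 0) :=
    fun i => Finset.sum_nonneg fun j _ => hnonneg i j
  have hkn : (k:ℕ) < n := k.isLt
  have hakn : ((a k : Fin n):ℕ) < n := (a k).isLt
  set iS : Fin (n+1) := ⟨(k:ℕ)+1, by omega⟩ with hiS
  set jS : Fin (n+1) := ⟨((a k : Fin n):ℕ)+1, by omega⟩ with hjS
  have hcondS : (k:ℕ) < (iS:ℕ) ∧ (iS:ℕ) ≤ (l:ℕ) ∧ ((a k : Fin n):ℕ) < (jS:ℕ)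
      ∧ (jS:ℕ) ≤ ((a l : Fin n):ℕ) := by
    rw [hiS, hjS]
    simp only [Fin.val_mk]
    omega
  have hR1 : (1:ℤ) ≤ ∑ i : Fin (n+1), ∑ j : Fin (n+1),
      (if (k:ℕ) < (i:ℕ) ∧ (i:ℕ) ≤ (l:ℕ) ∧ ((a k : Fin n):ℕ) < (j:ℕ)
          ∧ (j:ℕ) ≤ ((a l : Fin n):ℕ) then (1:ℤ) else 0) := by
    have hinnerS : (1:ℤ) ≤ ∑ j : Fin (n+1),
        (if (k:ℕ) < (iS:ℕ) ∧ (iS:ℕ) ≤ (l:ℕ) ∧ ((a k : Fin n):ℕ) < (j:ℕ)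
            ∧ (j:ℕ) ≤ ((a l : Fin n):ℕ) then (1:ℤ) else 0) := by
      have := Finset.single_le_sum (f := fun j : Fin (n+1) =>
        (if (k:ℕ) < (iS:ℕ) ∧ (iS:ℕ) ≤ (l:ℕ) ∧ ((a k : Fin n):ℕ) < (j:ℕ)
            ∧ (j:ℕ) ≤ ((a l : Fin n):ℕ) then (1:ℤ) else 0))
        (fun j _ => hnonneg iS j) (Finset.mem_univ jS)
      simpa only [if_pos hcondS] using this
    calc (1:ℤ) ≤ _ := hinnerS
      _ ≤ _ := Finset.single_le_sum (f := fun i : Fin (n+1) => ∑ j : Fin (n+1),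
          (if (k:ℕ) < (i:ℕ) ∧ (i:ℕ) ≤ (l:ℕ) ∧ ((a k : Fin n):ℕ) < (j:ℕ)
              ∧ (j:ℕ) ≤ ((a l : Fin n):ℕ) then (1:ℤ) else 0))
          (fun i _ => hinner i) (Finset.mem_univ iS)
  rw [hsum]
  linarith

lemma bruhat_of_le (M : ℕ) : ∀ (a b : Equiv.Perm (Fin n)),
    (∀ i j : Fin (n+1), distSum (PermMat a) i j ≤ distSum (PermMat b) i j) →
    (∑ i : Fin (n+1), ∑ j : Fin (n+1),
      (distSum (PermMat b) i j - distSum (PermMat a) i j)).toNat ≤ M →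
    Bruhat (PermMat a) (PermMat b) := by
  induction M with
  | zero =>
    intro a b h hM
    by_cases hab : a = b
    · rw [hab]
      exact Relation.ReflTransGen.refl
    · exfalso
      obtain ⟨a', _, h', hlt⟩ := step_lemma hab h
      have hS : (0:ℤ) ≤ ∑ i : Fin (n+1), ∑ j : Fin (n+1),
          (distSum (PermMat b) i j - distSum (PermMat a) i j) :=
        Finset.sum_nonneg fun i _ => Finset.sum_nonneg fun j _ => sub_nonneg.mpr (h i j)
      have hS' : (0:ℤ) ≤ ∑ i : Fin (n+1), ∑ j : Fin (n+1),
          (distSum (PermMat b) i j - distSum (PermMat a') i j) :=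
        Finset.sum_nonneg fun i _ => Finset.sum_nonneg fun j _ => sub_nonneg.mpr (h' i j)
      omega
  | succ M ih =>
    intro a b h hM
    by_cases hab : a = b
    · rw [hab]
      exact Relation.ReflTransGen.refl
    · obtain ⟨a', hstep, h', hlt⟩ := step_lemma hab h
      have hS' : (0:ℤ) ≤ ∑ i : Fin (n+1), ∑ j : Fin (n+1),
          (distSum (PermMat b) i j - distSum (PermMat a') i j) :=
        Finset.sum_nonneg fun i _ => Finset.sum_nonneg fun j _ => sub_nonneg.mpr (h' i j)
      exact Relation.ReflTransGen.head hstep (ih a' b h' (by omega))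

end BruhatAux

/-- the dot criterion for the Bruhat order:
`P_A` is below `P_B` in the Bruhat order iff `P_A^Σ ≤ P_B^Σ` elementwise. -/
theorem bruhat_iff_distSum_le {n : ℕ} (σA σB : Equiv.Perm (Fin n)) :
    Bruhat (PermMat σA) (PermMat σB) ↔
      ∀ i j : Fin (n+1), distSum (PermMat σA) i j ≤ distSum (PermMat σB) i j := by
  constructor
  · intro h
    have key : ∀ (Qm : Fin n → Fin n → ℤ), Relation.ReflTransGen BruhatStep (PermMat σA) Qm →
        ∀ i j : Fin (n+1), distSum (PermMat σA) i j ≤ distSum Qm i j := by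
      intro Qm hQ
      induction hQ with
      | refl => exact fun i j => le_rfl
      | tail _ hstep ih =>
        exact fun i j => (ih i j).trans (BruhatAux.distSum_le_of_step hstep i j)
    exact key _ h
  · intro h
    exact BruhatAux.bruhat_of_le _ σA σB h le_rfl
end

section
/- The semi-local score matrix is unit-anti-Monge: for strings a of length m and b of length n, there exists a permutation matrix P_{a,b} over ⟨−m:n | 0:m+n⟩ such that H_{a,b}(i,j) = j − i − P_{a,b}^Σ(i,j) for all i ∈ [−m:n], j ∈ [0:m+n]. -/
/-- Highest path score in the alignment dag of a string against a string with
wildcards (`none` is the wildcard `◇`, matching every character): equivalently,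
a longest-common-subsequence score where a wildcard matches everything. -/
def wlcs {α : Type*} [DecidableEq α] : List α → List (Option α) → ℕ
  | [], _ => 0
  | _ :: _, [] => 0
  | x :: xs, y :: ys =>
      max (max (wlcs (x :: xs) ys) (wlcs xs (y :: ys)))
        ((if y = none ∨ y = some x then 1 else 0) + wlcs xs ys)
termination_by a b => a.length + b.length

/-- The string `◇^m b ◇^m`. -/
def padded {α : Type*} (m : ℕ) (b : List α) : List (Option α) :=
  List.replicate m none ++ b.map some ++ List.replicate m none

/-- The semi-local score matrix `H_{a,b}`, with the row index shifted from
`[−m:n]` to `[0:m+n]`: `H(i,j)` is the highest score of a path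
`v_{0,i−m} → v_{m,j}` in the alignment dag `G_{a, ◇^m b ◇^m}`, i.e. the
score of `a` against the substring `(◇^m b ◇^m)⟨i−m:j⟩`; by convention
`H(i,j) = j − (i−m)` when `j < i−m`. -/
def Hsem {α : Type*} [DecidableEq α] (a b : List α) (m : ℕ) (i j : ℕ) : ℤ :=
  if i ≤ j + m then (wlcs a (((padded m b).drop i).take (j + m - i)) : ℤ)
  else (j : ℤ) + m - i



set_option linter.unusedSectionVars false
namespace SLU

def R : ℕ × ℕ → ℕ × ℕ → Prop := fun p q => p.1 < q.1 ∧ p.2 < q.2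

theorem R_trans {p q r : ℕ × ℕ} (h1 : R p q) (h2 : R q r) : R p r :=
  ⟨h1.1.trans h2.1, h1.2.trans h2.2⟩

variable {α : Type*} [DecidableEq α]

def Mtch (x : List α) (y : List (Option α)) (p : ℕ × ℕ) : Prop :=
  ∃ c, x[p.1]? = some c ∧ (y[p.2]? = some none ∨ y[p.2]? = some (some c))

theorem Mtch.lt_left {x : List α} {y : List (Option α)} {p : ℕ × ℕ}
    (h : Mtch x y p) : p.1 < x.length := by
  obtain ⟨c, hc, -⟩ := h; exact (List.getElem?_eq_some_iff.mp hc).1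

theorem Mtch.lt_right {x : List α} {y : List (Option α)} {p : ℕ × ℕ}
    (h : Mtch x y p) : p.2 < y.length := by
  obtain ⟨c, -, hc | hc⟩ := h <;> exact (List.getElem?_eq_some_iff.mp hc).1

def Chn (x : List α) (y : List (Option α)) (M : List (ℕ × ℕ)) : Prop :=
  M.Pairwise R ∧ ∀ p ∈ M, Mtch x y p

theorem chn_map {x x' : List α} {y y' : List (Option α)} {M : List (ℕ × ℕ)}
    (h : Chn x y M) (f : ℕ × ℕ → ℕ × ℕ)
    (hf : ∀ p ∈ M, ∀ q ∈ M, R p q → R (f p) (f q))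
    (hm : ∀ p ∈ M, Mtch x' y' (f p)) : Chn x' y' (M.map f) := by
  constructor
  · rw [List.pairwise_map, List.pairwise_iff_forall_sublist]
    intro a b hs
    have ha := hs.subset List.mem_cons_self
    have hb := hs.subset (List.mem_cons_of_mem _ List.mem_cons_self)
    exact hf a ha b hb (List.pairwise_iff_forall_sublist.mp h.1 hs)
  · intro q hq
    obtain ⟨p, hp, rfl⟩ := List.mem_map.mp hq
    exact hm p hp
end SLU

namespace SLU
variable {α : Type*} [DecidableEq α]

theorem mtch_tail {x0 : α} {y0 : Option α} {x : List α} {y : List (Option α)}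
    {p : ℕ × ℕ} (h : Mtch (x0::x) (y0::y) p) (h1 : 1 ≤ p.1) (h2 : 1 ≤ p.2) :
    Mtch x y (p.1 - 1, p.2 - 1) := by
  obtain ⟨c, hc1, hc2⟩ := h
  obtain ⟨k, hk⟩ : ∃ k, p.1 = k + 1 := ⟨p.1 - 1, by omega⟩
  obtain ⟨l, hl⟩ : ∃ l, p.2 = l + 1 := ⟨p.2 - 1, by omega⟩
  rw [hk, List.getElem?_cons_succ] at hc1
  rw [hl, List.getElem?_cons_succ] at hc2
  exact ⟨c, by simpa [hk] using hc1, by simpa [hl] using hc2⟩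

theorem mtch_tail_left {x0 : α} {x : List α} {y : List (Option α)}
    {p : ℕ × ℕ} (h : Mtch (x0::x) y p) (h1 : 1 ≤ p.1) : Mtch x y (p.1 - 1, p.2) := by
  obtain ⟨c, hc1, hc2⟩ := h
  obtain ⟨k, hk⟩ : ∃ k, p.1 = k + 1 := ⟨p.1 - 1, by omega⟩
  rw [hk, List.getElem?_cons_succ] at hc1
  exact ⟨c, by simpa [hk] using hc1, hc2⟩

theorem mtch_tail_right {y0 : Option α} {x : List α} {y : List (Option α)}
    {p : ℕ × ℕ} (h : Mtch x (y0::y) p) (h2 : 1 ≤ p.2) : Mtch x y (p.1, p.2 - 1) := by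
  obtain ⟨c, hc1, hc2⟩ := h
  obtain ⟨l, hl⟩ : ∃ l, p.2 = l + 1 := ⟨p.2 - 1, by omega⟩
  rw [hl, List.getElem?_cons_succ] at hc2
  exact ⟨c, hc1, by simpa [hl] using hc2⟩

theorem mtch_cons_left {x0 : α} {x : List α} {y : List (Option α)}
    {p : ℕ × ℕ} (h : Mtch x y p) : Mtch (x0::x) y (p.1 + 1, p.2) := by
  obtain ⟨c, hc1, hc2⟩ := h
  exact ⟨c, by simpa using hc1, hc2⟩

theorem mtch_cons_right {y0 : Option α} {x : List α} {y : List (Option α)}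
    {p : ℕ × ℕ} (h : Mtch x y p) : Mtch x (y0::y) (p.1, p.2 + 1) := by
  obtain ⟨c, hc1, hc2⟩ := h
  exact ⟨c, hc1, by simpa using hc2⟩

theorem mtch_cons_both {x0 : α} {y0 : Option α} {x : List α} {y : List (Option α)}
    {p : ℕ × ℕ} (h : Mtch x y p) : Mtch (x0::x) (y0::y) (p.1 + 1, p.2 + 1) := by
  obtain ⟨c, hc1, hc2⟩ := h
  exact ⟨c, by simpa using hc1, by simpa using hc2⟩

theorem wlcs_cons_eq (x : α) (xs : List α) (y : Option α) (ys : List (Option α)) :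
    wlcs (x::xs) (y::ys) = max (max (wlcs (x :: xs) ys) (wlcs xs (y :: ys)))
        ((if y = none ∨ y = some x then 1 else 0) + wlcs xs ys) := by
  rw [wlcs]

theorem chn_length_le : ∀ (x : List α) (y : List (Option α)) (M : List (ℕ × ℕ)),
    Chn x y M → M.length ≤ wlcs x y
  | [], y, M, h => by
    have hM : M = [] := by
      rw [List.eq_nil_iff_forall_not_mem]
      intro p hp
      exact absurd (h.2 p hp).lt_left (by simp)
    subst hM; simp
  | x :: xs, [], M, h => by
    have hM : M = [] := by
      rw [List.eq_nil_iff_forall_not_mem]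
      intro p hp
      exact absurd (h.2 p hp).lt_right (by simp)
    subst hM; simp
  | x :: xs, y :: ys, M, h => by
    rw [wlcs_cons_eq]
    cases M with
    | nil => simp
    | cons p M' =>
      obtain ⟨hpw, hmem⟩ := h
      rw [List.pairwise_cons] at hpw
      obtain ⟨hpM', hpw'⟩ := hpw
      have hchn' : Chn (x::xs) (y::ys) M' := ⟨hpw', fun q hq => hmem q (List.mem_cons_of_mem _ hq)⟩
      by_cases hj : p.2 = 0
      · by_cases hi : p.1 = 0
        · -- head match at (0,0)
          have hC : Chn xs ys (M'.map fun q => (q.1 - 1, q.2 - 1)) := by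
            refine chn_map hchn' _ (fun a ha b hb hr => ?_) (fun q hq => ?_)
            · have h1 := hpM' a ha; have h2 := hpM' b hb
              exact ⟨by have := h1.1; have := h2.1; have := hr.1; omega,
                     by have := h1.2; have := h2.2; have := hr.2; omega⟩
            · have h1 := hpM' q hq
              exact mtch_tail (hchn'.2 q hq) (by have := h1.1; omega) (by have := h1.2; omega)
          have hrec := chn_length_le xs ys _ hC
          rw [List.length_map] at hrec
          have hone : (if y = none ∨ y = some x then 1 else 0) = 1 := by
            obtain ⟨c, hc1, hc2⟩ := hmem p List.mem_cons_self
            rw [hi] at hc1; rw [hj] at hc2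
            simp only [List.getElem?_cons_zero] at hc1 hc2
            have : c = x := (by simpa using hc1 : x = c).symm
            subst this
            rcases hc2 with h' | h' <;> simp [Option.some.injEq] at h' <;> simp [h']
          calc (p :: M').length = M'.length + 1 := by simp
            _ ≤ wlcs xs ys + 1 := by omega
            _ = (if y = none ∨ y = some x then 1 else 0) + wlcs xs ys := by omega
            _ ≤ _ := le_max_right _ _
        · -- all rows ≥ 1
          have hrows : ∀ q ∈ p :: M', 1 ≤ q.1 := by
            intro q hq
            rcases List.mem_cons.mp hq with rfl | hq'
            · omega
            · have := (hpM' q hq').1; omega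
          have hC : Chn xs (y::ys) ((p :: M').map fun q => (q.1 - 1, q.2)) := by
            refine chn_map ⟨List.pairwise_cons.mpr ⟨hpM', hpw'⟩, hmem⟩ _ (fun a ha b hb hr => ?_) (fun q hq => ?_)
            · exact ⟨by have := hrows a ha; have := hrows b hb; have := hr.1; omega, hr.2⟩
            · exact mtch_tail_left (hmem q hq) (hrows q hq)
          have hrec := chn_length_le xs (y::ys) _ hC
          rw [List.length_map] at hrec
          exact le_trans hrec (le_trans (le_max_right _ _) (le_max_left _ _))
      · -- all cols ≥ 1
        have hcols : ∀ q ∈ p :: M', 1 ≤ q.2 := by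
          intro q hq
          rcases List.mem_cons.mp hq with rfl | hq'
          · omega
          · have := (hpM' q hq').2; omega
        have hC : Chn (x::xs) ys ((p :: M').map fun q => (q.1, q.2 - 1)) := by
          refine chn_map ⟨List.pairwise_cons.mpr ⟨hpM', hpw'⟩, hmem⟩ _ (fun a ha b hb hr => ?_) (fun q hq => ?_)
          · exact ⟨hr.1, by have := hcols a ha; have := hcols b hb; have := hr.2; omega⟩
          · exact mtch_tail_right (hmem q hq) (hcols q hq)
        have hrec := chn_length_le (x::xs) ys _ hC
        rw [List.length_map] at hrec
        exact le_trans hrec (le_trans (le_max_left _ _) (le_max_left _ _))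
termination_by x y => x.length + y.length
decreasing_by all_goals (simp [List.length_cons]; try omega)

end SLU

namespace SLU
variable {α : Type*} [DecidableEq α]

theorem wlcs_le_cons (x : List α) (y : Option α) (ys : List (Option α)) :
    wlcs x ys ≤ wlcs x (y::ys) := by
  cases x with
  | nil => simp [wlcs]
  | cons a xs => rw [wlcs_cons_eq]; exact le_trans (le_max_left _ _) (le_max_left _ _)

theorem chn_exists : ∀ (x : List α) (y : List (Option α)),
    ∃ M, Chn x y M ∧ M.length = wlcs x y
  | [], y => ⟨[], ⟨by simp, by simp⟩, by simp [wlcs]⟩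
  | x :: xs, [] => ⟨[], ⟨by simp, by simp⟩, by simp [wlcs]⟩
  | x :: xs, y :: ys => by
    obtain ⟨M1, hM1, hl1⟩ := chn_exists (x::xs) ys
    obtain ⟨M2, hM2, hl2⟩ := chn_exists xs (y::ys)
    obtain ⟨M3, hM3, hl3⟩ := chn_exists xs ys
    rw [wlcs_cons_eq]
    have C1 : Chn (x::xs) (y::ys) (M1.map fun p => (p.1, p.2+1)) :=
      chn_map hM1 _ (fun a _ b _ hr => ⟨hr.1, by have := hr.2; omega⟩)
        (fun q hq => mtch_cons_right (hM1.2 q hq))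
    have C2 : Chn (x::xs) (y::ys) (M2.map fun p => (p.1+1, p.2)) :=
      chn_map hM2 _ (fun a _ b _ hr => ⟨by have := hr.1; omega, hr.2⟩)
        (fun q hq => mtch_cons_left (hM2.2 q hq))
    rcases max_choice (max (wlcs (x::xs) ys) (wlcs xs (y::ys)))
      ((if y = none ∨ y = some x then 1 else 0) + wlcs xs ys) with hmax | hmax <;> rw [hmax]
    · rcases max_choice (wlcs (x::xs) ys) (wlcs xs (y::ys)) with h' | h' <;> rw [h']
      · exact ⟨_, C1, by simp [hl1]⟩
      · exact ⟨_, C2, by simp [hl2]⟩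
    · by_cases hy : y = none ∨ y = some x
      · have C3 : Chn (x::xs) (y::ys) (M3.map fun p => (p.1+1, p.2+1)) :=
          chn_map hM3 _ (fun a _ b _ hr => ⟨by have := hr.1; omega, by have := hr.2; omega⟩)
            (fun q hq => mtch_cons_both (hM3.2 q hq))
        refine ⟨(0,0) :: M3.map (fun p => (p.1+1, p.2+1)), ⟨?_, ?_⟩, ?_⟩
        · rw [List.pairwise_cons]
          refine ⟨fun q hq => ?_, C3.1⟩
          obtain ⟨p, hp, rfl⟩ := List.mem_map.mp hq
          exact ⟨Nat.succ_pos _, Nat.succ_pos _⟩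
        · intro q hq
          rcases List.mem_cons.mp hq with rfl | hq'
          · refine ⟨x, by simp, ?_⟩
            rcases hy with rfl | rfl
            · left; simp
            · right; simp
          · exact C3.2 q hq'
        · simp [hl3, hy]; omega
      · have hle : wlcs xs ys ≤ wlcs xs (y::ys) := wlcs_le_cons xs y ys
        have hge : wlcs xs (y::ys) ≤ (if y = none ∨ y = some x then 1 else 0) + wlcs xs ys := by
          calc wlcs xs (y::ys) ≤ max (wlcs (x::xs) ys) (wlcs xs (y::ys)) := le_max_right _ _
            _ ≤ _ := le_trans (le_max_left _ _) (le_of_eq hmax)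
        have heq : wlcs xs (y::ys) = wlcs xs ys := by simp [hy] at hge; omega
        refine ⟨_, C2, ?_⟩
        simp [hl2, heq, hy]
termination_by x y => x.length + y.length
decreasing_by all_goals (simp [List.length_cons]; try omega)

end SLU

namespace SLU
variable {α : Type*} [DecidableEq α]

theorem len_le_of_pairwise_lt (l : List ℕ) (h : l.Pairwise (·<·)) (n : ℕ)
    (hb : ∀ i ∈ l, i < n) : l.length ≤ n := by
  have hn : l.Nodup := h.imp (fun h => Nat.ne_of_lt h)
  calc l.length = l.toFinset.card := (List.toFinset_card_of_nodup hn).symm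
    _ ≤ (Finset.range n).card := Finset.card_le_card (by
        intro i hi; rw [List.mem_toFinset] at hi; exact Finset.mem_range.mpr (hb i hi))
    _ = n := Finset.card_range n

theorem wlcs_le_left (x : List α) (y : List (Option α)) : wlcs x y ≤ x.length := by
  obtain ⟨M, hM, hl⟩ := chn_exists x y
  rw [← hl]
  have : (M.map Prod.fst).Pairwise (·<·) := List.pairwise_map.mpr (hM.1.imp fun hr => hr.1)
  have hb : ∀ i ∈ M.map Prod.fst, i < x.length := by
    intro i hi; obtain ⟨p, hp, rfl⟩ := List.mem_map.mp hi; exact (hM.2 p hp).lt_left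
  simpa using len_le_of_pairwise_lt _ this x.length hb

theorem wlcs_le_right (x : List α) (y : List (Option α)) : wlcs x y ≤ y.length := by
  obtain ⟨M, hM, hl⟩ := chn_exists x y
  rw [← hl]
  have : (M.map Prod.snd).Pairwise (·<·) := List.pairwise_map.mpr (hM.1.imp fun hr => hr.2)
  have hb : ∀ i ∈ M.map Prod.snd, i < y.length := by
    intro i hi; obtain ⟨p, hp, rfl⟩ := List.mem_map.mp hi; exact (hM.2 p hp).lt_right
  simpa using len_le_of_pairwise_lt _ this y.length hb

theorem mtch_append_right {x : List α} {y z : List (Option α)} {p : ℕ × ℕ}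
    (h : Mtch x y p) : Mtch x (y ++ z) p := by
  obtain ⟨c, hc1, hc2⟩ := h
  have hlt : p.2 < y.length := by
    rcases hc2 with h' | h' <;> exact (List.getElem?_eq_some_iff.mp h').1
  refine ⟨c, hc1, ?_⟩
  rw [List.getElem?_append, if_pos hlt]
  exact hc2

theorem mtch_of_append {x : List α} {y z : List (Option α)} {p : ℕ × ℕ}
    (h : Mtch x (y ++ z) p) (hp : p.2 < y.length) : Mtch x y p := by
  obtain ⟨c, hc1, hc2⟩ := h
  rw [List.getElem?_append, if_pos hp] at hc2
  exact ⟨c, hc1, hc2⟩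

theorem mtch_shift {x : List α} {s : List (Option α)} (t : List (Option α)) {p : ℕ × ℕ}
    (h : Mtch x s p) : Mtch x (t ++ s) (p.1, p.2 + t.length) := by
  obtain ⟨c, hc1, hc2⟩ := h
  refine ⟨c, hc1, ?_⟩
  rw [List.getElem?_append_right (by omega)]
  simpa using hc2

theorem wlcs_mono_append_right (x : List α) (y z : List (Option α)) :
    wlcs x y ≤ wlcs x (y ++ z) := by
  obtain ⟨M, hM, hl⟩ := chn_exists x y
  rw [← hl]
  exact chn_length_le _ _ _ ⟨hM.1, fun p hp => mtch_append_right (hM.2 p hp)⟩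

theorem wlcs_mono_prepend (x : List α) (t s : List (Option α)) :
    wlcs x s ≤ wlcs x (t ++ s) := by
  obtain ⟨M, hM, hl⟩ := chn_exists x s
  rw [← hl]
  have := chn_length_le x (t ++ s) _ (chn_map hM (fun p => (p.1, p.2 + t.length))
    (fun a _ b _ hr => by have := hr.1; have := hr.2; exact ⟨(by omega : a.1 < b.1), (by omega : a.2 + t.length < b.2 + t.length)⟩)
    (fun q hq => mtch_shift t (hM.2 q hq)))
  simpa using this

theorem wlcs_nil_right (x : List α) : wlcs x [] = 0 := by cases x <;> simp [wlcs]

theorem wlcs_append_singleton_le (x : List α) (y : List (Option α)) (e : Option α) :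
    wlcs x (y ++ [e]) ≤ wlcs x y + 1 := by
  obtain ⟨M, hM, hl⟩ := chn_exists x (y ++ [e])
  rw [← hl]
  set p1 : ℕ × ℕ → Bool := fun p => decide (p.2 < y.length) with hp1
  have hM' : Chn x y (M.filter p1) := by
    refine ⟨hM.1.filter _, fun p hp => ?_⟩
    rw [List.mem_filter] at hp
    exact mtch_of_append (hM.2 p hp.1) (by simpa [hp1] using hp.2)
  have hlen1 := chn_length_le _ _ _ hM'
  have hsplit := List.length_eq_length_filter_add (l := M) p1
  have hone : (M.filter (fun p => !(p1 p))).length ≤ 1 := by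
    have hpw : (M.filter (fun p => !(p1 p))).Pairwise R := hM.1.filter _
    have hcol : ∀ p ∈ M.filter (fun p => !(p1 p)), p.2 = y.length := by
      intro p hp
      rw [List.mem_filter] at hp
      have h2 := (hM.2 p hp.1).lt_right
      simp at h2
      have : ¬ (p.2 < y.length) := by simpa [hp1] using hp.2
      omega
    match hf : M.filter (fun p => !(p1 p)) with
    | [] => simp
    | [q] => simp
    | q :: r :: t =>
      rw [hf] at hpw hcol
      exfalso
      have h1 := hcol q (by simp)
      have h2 := hcol r (by simp)
      have := (List.pairwise_cons.mp hpw).1 r (by simp)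
      have := this.2
      omega
  omega

theorem wlcs_cons_le (x : List α) (c : Option α) (y : List (Option α)) :
    wlcs x (c :: y) ≤ wlcs x y + 1 := by
  obtain ⟨M, hM, hl⟩ := chn_exists x (c :: y)
  rw [← hl]
  set p1 : ℕ × ℕ → Bool := fun p => decide (1 ≤ p.2) with hp1
  have hM' : Chn x y ((M.filter p1).map fun p => (p.1, p.2 - 1)) := by
    refine chn_map ⟨hM.1.filter _, fun p hp => hM.2 p (List.mem_filter.mp hp).1⟩ _
      (fun a ha b hb hr => ?_) (fun q hq => ?_)
    · have h1 : (1:ℕ) ≤ a.2 := by simpa [hp1] using (List.mem_filter.mp ha).2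
      have h2 : (1:ℕ) ≤ b.2 := by simpa [hp1] using (List.mem_filter.mp hb).2
      exact ⟨hr.1, by have := hr.2; omega⟩
    · rw [List.mem_filter] at hq
      exact mtch_tail_right (hM.2 q hq.1) (by simpa [hp1] using hq.2)
  have hlen1 := chn_length_le _ _ _ hM'
  rw [List.length_map] at hlen1
  have hsplit := List.length_eq_length_filter_add (l := M) p1
  have hone : (M.filter (fun p => !(p1 p))).length ≤ 1 := by
    have hpw : (M.filter (fun p => !(p1 p))).Pairwise R := hM.1.filter _
    have hcol : ∀ p ∈ M.filter (fun p => !(p1 p)), p.2 = 0 := by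
      intro p hp
      rw [List.mem_filter] at hp
      have : ¬ (1 ≤ p.2) := by simpa [hp1] using hp.2
      omega
    match hf : M.filter (fun p => !(p1 p)) with
    | [] => simp
    | [q] => simp
    | q :: r :: t =>
      rw [hf] at hpw hcol
      exfalso
      have h1 := hcol q (by simp)
      have h2 := hcol r (by simp)
      have := ((List.pairwise_cons.mp hpw).1 r (by simp)).2
      omega
  omega

theorem wlcs_replicate (x : List α) (k : ℕ) :
    wlcs x (List.replicate k none) = min x.length k := by
  refine le_antisymm (le_min (wlcs_le_left _ _) (by simpa using wlcs_le_right x (List.replicate k none))) ?_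
  have hC : Chn x (List.replicate k none) ((List.range (min x.length k)).map fun i => (i, i)) := by
    constructor
    · rw [List.pairwise_map]
      exact List.pairwise_lt_range.imp fun h => ⟨h, h⟩
    · intro p hp
      obtain ⟨i, hi, rfl⟩ := List.mem_map.mp hp
      rw [List.mem_range] at hi
      exact ⟨x[i], by rw [List.getElem?_eq_getElem (by omega)], Or.inl (by
        rw [List.getElem?_replicate, if_pos (by omega)])⟩
  have := chn_length_le _ _ _ hC
  simpa using this

end SLU

namespace SLU

open Classical in
theorem crossing (A B : List (ℕ × ℕ)) (hA : A.Pairwise R) (hB : B.Pairwise R)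
    (hlen : 2 ≤ A.length)
    (hfirst : ∀ q ∈ B, (A.getD 0 (0,0)).2 < q.2)
    (hlast : ∀ q ∈ B, q.2 < (A.getD (A.length - 1) (0,0)).2) :
    ∃ k l, 1 ≤ k ∧ k ≤ A.length - 1 ∧ l ≤ B.length ∧
      (l = B.length ∨ R (A.getD (k-1) (0,0)) (B.getD l (0,0))) ∧
      (l = 0 ∨ R (B.getD (l-1) (0,0)) (A.getD k (0,0))) := by
  set f : ℕ → ℕ × ℕ := fun i => A.getD i (0,0) with hf
  set g : ℕ → ℕ × ℕ := fun j => B.getD j (0,0) with hg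
  set al := A.length
  set bl := B.length
  have hApw : ∀ i j, i < j → j < al → R (f i) (f j) := by
    intro i j hij hj
    rw [hf]; simp only
    rw [List.getD_eq_getElem A (0,0) (lt_trans hij hj), List.getD_eq_getElem A (0,0) hj]
    exact List.pairwise_iff_getElem.mp hA i j _ _ hij
  have hBpw : ∀ i j, i < j → j < bl → R (g i) (g j) := by
    intro i j hij hj
    rw [hg]; simp only
    rw [List.getD_eq_getElem B (0,0) (lt_trans hij hj), List.getD_eq_getElem B (0,0) hj]
    exact List.pairwise_iff_getElem.mp hB i j _ _ hij
  have hBmem : ∀ j, j < bl → g j ∈ B := by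
    intro j hj; rw [hg]; simp only
    rw [List.getD_eq_getElem B (0,0) hj]; exact B.getElem_mem hj
  have hex : ∀ k, ∃ l, l = bl ∨ ¬ R (g l) (f k) := fun k => ⟨bl, Or.inl rfl⟩
  set L : ℕ → ℕ := fun k => Nat.find (hex k) with hL
  have hLle : ∀ k, L k ≤ bl := fun k => Nat.find_min' (hex k) (Or.inl rfl)
  have hLlt : ∀ k j, j < L k → R (g j) (f k) := by
    intro k j hj
    have := Nat.find_min (hex k) hj
    push_neg at this
    exact this.2
  have hLspec : ∀ k, L k = bl ∨ ¬ R (g (L k)) (f k) := fun k => Nat.find_spec (hex k)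
  -- if some k in range has success, done
  by_cases hsucc : ∃ k, 1 ≤ k ∧ k ≤ al - 1 ∧ (L k = bl ∨ R (f (k-1)) (g (L k)))
  · obtain ⟨k, hk1, hk2, hk3⟩ := hsucc
    refine ⟨k, L k, hk1, hk2, hLle k, hk3, ?_⟩
    rcases Nat.eq_zero_or_pos (L k) with h0 | h0
    · exact Or.inl h0
    · exact Or.inr (hLlt k (L k - 1) (by omega))
  · push_neg at hsucc
    -- every k in range fails
    have hfail : ∀ k, 1 ≤ k → k ≤ al - 1 → L k < bl ∧ ¬ R (g (L k)) (f k) ∧ ¬ R (f (k-1)) (g (L k)) := by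
      intro k h1 h2
      obtain ⟨hne, hnr⟩ := hsucc k h1 h2
      have hlt : L k < bl := lt_of_le_of_ne (hLle k) hne
      refine ⟨hlt, ?_, hnr⟩
      rcases hLspec k with h | h
      · omega
      · exact h
    -- F1/F2 dichotomy
    have hF12 : ∀ k, 1 ≤ k → k ≤ al - 1 →
        ((f k).1 ≤ (g (L k)).1 ∧ (g (L k)).2 ≤ (f (k-1)).2) ∨
        ((f k).2 ≤ (g (L k)).2 ∧ (g (L k)).1 ≤ (f (k-1)).1) := by
      intro k h1 h2
      obtain ⟨hlt, hn1, hn2⟩ := hfail k h1 h2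
      have hstep : R (f (k-1)) (f k) := hApw (k-1) k (by omega) (by omega)
      simp only [R, not_and, not_lt] at hn1 hn2
      obtain ⟨hs1, hs2⟩ := hstep
      omega
    have hP : ∃ k, 1 ≤ k ∧ k ≤ al - 1 ∧ ((f k).1 ≤ (g (L k)).1 ∧ (g (L k)).2 ≤ (f (k-1)).2) := by
      refine ⟨al - 1, by omega, le_refl _, ?_⟩
      rcases hF12 (al-1) (by omega) (le_refl _) with h | h
      · exact h
      · exfalso
        have hlt := (hfail (al-1) (by omega) (le_refl _)).1
        have h5 := hlast (g (L (al-1))) (hBmem _ hlt)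
        rw [show A.getD (al-1) (0,0) = f (al-1) from rfl] at h5
        have := h.1
        omega
    set k₀ := Nat.find hP with hk₀
    have hkspec := Nat.find_spec hP
    rw [← hk₀] at hkspec
    obtain ⟨hk1, hk2, hk3⟩ := hkspec
    -- k₀ ≥ 2
    have hk₀2 : 2 ≤ k₀ := by
      rcases Nat.lt_or_ge k₀ 2 with h | h
      · exfalso
        have hkeq : k₀ = 1 := by omega
        have hlt := (hfail 1 (le_refl _) (by omega)).1
        have h5 := hfirst (g (L 1)) (hBmem _ hlt)
        rw [show A.getD 0 (0,0) = f 0 from rfl] at h5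
        rw [hkeq] at hk3
        rw [show f (1-1) = f 0 from rfl] at hk3
        have := hk3.2
        omega
      · exact h
    -- k₀ - 1 fails with F2
    have hnF1 : ¬ (1 ≤ k₀-1 ∧ k₀-1 ≤ al - 1 ∧ ((f (k₀-1)).1 ≤ (g (L (k₀-1))).1 ∧ (g (L (k₀-1))).2 ≤ (f (k₀-1-1)).2)) :=
      Nat.find_min hP (by omega)
    have hF2 : (f (k₀-1)).2 ≤ (g (L (k₀-1))).2 ∧ (g (L (k₀-1))).1 ≤ (f (k₀-1-1)).1 := by
      rcases hF12 (k₀-1) (by omega) (by omega) with h | h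
      · exact absurd ⟨by omega, by omega, h⟩ hnF1
      · exact h
    -- contradiction
    exfalso
    have hju : L (k₀-1) < bl := (hfail (k₀-1) (by omega) (by omega)).1
    have hjw : L k₀ < bl := (hfail k₀ (by omega) (by omega)).1
    have hstep2 : R (f (k₀-2)) (f k₀) := hApw (k₀-2) k₀ (by omega) (by omega)
    have heq : k₀ - 1 - 1 = k₀ - 2 := by omega
    rw [heq] at hF2
    have hu1 : (g (L (k₀-1))).1 < (g (L k₀)).1 := by
      have := hstep2.1
      have := hF2.2
      have := hk3.1
      omega
    have hw2 : (g (L k₀)).2 ≤ (g (L (k₀-1))).2 := by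
      have := hk3.2
      have := hF2.1
      omega
    rcases Nat.lt_trichotomy (L (k₀-1)) (L k₀) with h | h | h
    · have := (hBpw _ _ h hjw).2; omega
    · rw [h] at hu1; omega
    · have := (hBpw _ _ h hju).1; omega

end SLU

namespace SLU
variable {α : Type*} [DecidableEq α]

theorem mem_take_getElem {γ : Type*} {l : List γ} {k : ℕ} {a : γ} (h : a ∈ l.take k) :
    ∃ i, ∃ _ : i < l.length, i < k ∧ l[i] = a := by
  obtain ⟨i, hi, heq⟩ := List.mem_iff_getElem.mp h
  rw [List.length_take] at hi
  exact ⟨i, by omega, by omega, by rw [List.getElem_take] at heq; exact heq⟩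

theorem mem_drop_getElem {γ : Type*} {l : List γ} {k : ℕ} {a : γ} (h : a ∈ l.drop k) :
    ∃ i, ∃ _ : k + i < l.length, l[k + i] = a := by
  obtain ⟨i, hi, heq⟩ := List.mem_iff_getElem.mp h
  rw [List.length_drop] at hi
  exact ⟨i, by omega, by rw [List.getElem_drop] at heq; exact heq⟩

theorem wlcs_cross (x : List α) (c e : Option α) (y : List (Option α)) :
    wlcs x (c :: (y ++ [e])) + wlcs x y ≤ wlcs x (c :: y) + wlcs x (y ++ [e]) := by
  classical
  set L := y.length with hLdef
  obtain ⟨A, hA, hlA⟩ := chn_exists x (c :: (y ++ [e]))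
  obtain ⟨B0, hB0, hlB0⟩ := chn_exists x y
  have hAbound : ∀ p ∈ A, p.2 < L + 2 := by
    intro p hp
    have := (hA.2 p hp).lt_right
    simp [hLdef] at this; omega
  by_cases hc1 : ∀ p ∈ A, p.2 < L + 1
  · -- A lives in c :: y
    have hAy : Chn x (c :: y) A := by
      refine ⟨hA.1, fun p hp => ?_⟩
      have := hA.2 p hp
      rw [show c :: (y ++ [e]) = (c :: y) ++ [e] by simp] at this
      exact mtch_of_append this (by simpa using hc1 p hp)
    have h1 := chn_length_le _ _ _ hAy
    have h2 := wlcs_mono_append_right x y [e]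
    omega
  · push_neg at hc1
    obtain ⟨pL, hpLmem, hpL2⟩ := hc1
    have hpL : pL.2 = L + 1 := by have := hAbound pL hpLmem; omega
    by_cases hc2 : ∀ p ∈ A, 1 ≤ p.2
    · -- shift A down into y ++ [e]
      have hAy : Chn x (y ++ [e]) (A.map fun p => (p.1, p.2 - 1)) := by
        refine chn_map hA _ (fun a ha b hb hr => ?_) (fun q hq => ?_)
        · have := hc2 a ha; have := hc2 b hb
          exact ⟨hr.1, by have := hr.2; simp only; omega⟩
        · exact mtch_tail_right (hA.2 q hq) (hc2 q hq)
      have h1 := chn_length_le _ _ _ hAy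
      rw [List.length_map] at h1
      have h2 := wlcs_le_cons x c y
      omega
    · push_neg at hc2
      obtain ⟨p0, hp0mem, hp02⟩ := hc2
      have hp0 : p0.2 = 0 := by omega
      -- the shifted B chain
      set B := B0.map (fun p => (p.1, p.2 + 1)) with hBdef
      have hB : B.Pairwise R := by
        rw [hBdef, List.pairwise_map]
        exact hB0.1.imp fun hr => ⟨hr.1, Nat.add_lt_add_right hr.2 1⟩
      have hBcol : ∀ q ∈ B, 1 ≤ q.2 ∧ q.2 < L + 1 := by
        intro q hq
        obtain ⟨p, hp, rfl⟩ := List.mem_map.mp hq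
        have := (hB0.2 p hp).lt_right
        simp only
        omega
      have hBmtch : ∀ q ∈ B, Mtch x (c :: y) q ∧ Mtch x (c :: (y ++ [e])) q := by
        intro q hq
        obtain ⟨p, hp, rfl⟩ := List.mem_map.mp hq
        exact ⟨mtch_cons_right (hB0.2 p hp),
               mtch_cons_right (mtch_append_right (hB0.2 p hp))⟩
      -- getD-style access
      have hApwD : ∀ i j, i < j → j < A.length → R (A.getD i (0,0)) (A.getD j (0,0)) := by
        intro i j hij hj
        rw [List.getD_eq_getElem A (0,0) (lt_trans hij hj), List.getD_eq_getElem A (0,0) hj]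
        exact List.pairwise_iff_getElem.mp hA.1 i j _ _ hij
      have hBpwD : ∀ i j, i < j → j < B.length → R (B.getD i (0,0)) (B.getD j (0,0)) := by
        intro i j hij hj
        rw [List.getD_eq_getElem B (0,0) (lt_trans hij hj), List.getD_eq_getElem B (0,0) hj]
        exact List.pairwise_iff_getElem.mp hB i j _ _ hij
      have hAmemD : ∀ i, i < A.length → A.getD i (0,0) ∈ A := by
        intro i hi; rw [List.getD_eq_getElem A (0,0) hi]; exact A.getElem_mem hi
      have hBmemD : ∀ j, j < B.length → B.getD j (0,0) ∈ B := by
        intro j hj; rw [List.getD_eq_getElem B (0,0) hj]; exact B.getElem_mem hj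
      have hAboundD : ∀ i, i < A.length → (A.getD i (0,0)).2 < L + 2 :=
        fun i hi => hAbound _ (hAmemD i hi)
      -- A has length ≥ 2 and canonical endpoints
      obtain ⟨i0, hi0len, hi0eq⟩ := List.mem_iff_getElem.mp hp0mem
      obtain ⟨iL, hiLlen, hiLeq⟩ := List.mem_iff_getElem.mp hpLmem
      have hi0eq' : A.getD i0 (0,0) = p0 := by rw [List.getD_eq_getElem A (0,0) hi0len]; exact hi0eq
      have hiLeq' : A.getD iL (0,0) = pL := by rw [List.getD_eq_getElem A (0,0) hiLlen]; exact hiLeq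
      have hlen2 : 2 ≤ A.length := by
        rcases Nat.lt_trichotomy i0 iL with h | h | h
        · omega
        · exfalso
          rw [h, hiLeq'] at hi0eq'
          rw [hi0eq'] at hpL
          omega
        · omega
      have hA0 : (A.getD 0 (0,0)).2 = 0 := by
        rcases Nat.eq_zero_or_pos i0 with h | h
        · rw [h] at hi0eq'
          rw [hi0eq']
          exact hp0
        · have := (hApwD 0 i0 h hi0len).2
          rw [hi0eq'] at this
          omega
      have hAlast : (A.getD (A.length - 1) (0,0)).2 = L + 1 := by
        rcases Nat.lt_or_ge iL (A.length - 1) with h | h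
        · exfalso
          have h1 := (hApwD iL (A.length - 1) h (by omega)).2
          rw [hiLeq'] at h1
          have h2 := hAboundD (A.length - 1) (by omega)
          omega
        · have : iL = A.length - 1 := by omega
          rw [← this, hiLeq', hpL]
      -- crossing
      obtain ⟨k, l, hk1, hk2, hl1, hcond1, hcond2⟩ := crossing A B hA.1 hB hlen2
        (by intro q hq; rw [hA0]; exact (hBcol q hq).1)
        (by intro q hq; rw [hAlast]; exact (hBcol q hq).2)
      have hkA : k < A.length := by omega
      have htakecol : ∀ i, i < k → (A.getD i (0,0)).2 < L + 1 := by
        intro i hik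
        have h1 := (hApwD i (A.length - 1) (by omega) (by omega)).2
        omega
      have hdropcol : ∀ i, i < A.length → k ≤ i → 1 ≤ (A.getD i (0,0)).2 := by
        intro i hi hik
        have := (hApwD 0 i (by omega) hi).2
        omega
      have hmem_takeA : ∀ a ∈ A.take k, ∃ i, i < A.length ∧ i < k ∧ A.getD i (0,0) = a := by
        intro a ha
        obtain ⟨i, hilen, hik, hieq⟩ := mem_take_getElem ha
        exact ⟨i, hilen, hik, by rw [List.getD_eq_getElem A (0,0) hilen]; exact hieq⟩
      have hmem_dropA : ∀ a ∈ A.drop k, ∃ i, k + i < A.length ∧ A.getD (k+i) (0,0) = a := by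
        intro a ha
        obtain ⟨i, hilen, hieq⟩ := mem_drop_getElem ha
        exact ⟨i, hilen, by rw [List.getD_eq_getElem A (0,0) hilen]; exact hieq⟩
      have hmem_takeB : ∀ a ∈ B.take l, ∃ j, j < B.length ∧ j < l ∧ B.getD j (0,0) = a := by
        intro a ha
        obtain ⟨j, hjlen, hjl, hjeq⟩ := mem_take_getElem ha
        exact ⟨j, hjlen, hjl, by rw [List.getD_eq_getElem B (0,0) hjlen]; exact hjeq⟩
      have hmem_dropB : ∀ a ∈ B.drop l, ∃ j, l + j < B.length ∧ B.getD (l+j) (0,0) = a := by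
        intro a ha
        obtain ⟨j, hjlen, hjeq⟩ := mem_drop_getElem ha
        exact ⟨j, hjlen, by rw [List.getD_eq_getElem B (0,0) hjlen]; exact hjeq⟩
      -- chain C in c :: y
      have hC : Chn x (c :: y) (A.take k ++ B.drop l) := by
        constructor
        · rw [List.pairwise_append]
          refine ⟨List.Pairwise.sublist (List.take_sublist k A) hA.1,
                  List.Pairwise.sublist (List.drop_sublist l B) hB, ?_⟩
          intro a ha b hb
          obtain ⟨i, hilen, hik, hieq⟩ := hmem_takeA a ha
          obtain ⟨j, hjlen, hjeq⟩ := hmem_dropB b hb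
          subst hieq; subst hjeq
          have hlltB : l < B.length := by omega
          rcases hcond1 with hcase | hcase
          · omega
          · have h1 : R (A.getD i (0,0)) (B.getD l (0,0)) := by
              rcases Nat.lt_or_ge i (k-1) with hik' | hik'
              · exact R_trans (hApwD i (k-1) hik' (by omega)) hcase
              · have : i = k - 1 := by omega
                rw [this]; exact hcase
            rcases Nat.eq_zero_or_pos j with hj0 | hj0
            · rw [hj0]; exact h1
            · exact R_trans h1 (hBpwD l (l+j) (by omega) hjlen)
        · intro p hp
          rcases List.mem_append.mp hp with hp' | hp'
          · obtain ⟨i, hilen, hik, hieq⟩ := hmem_takeA p hp'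
            have hmem : p ∈ A := (List.take_sublist k A).subset hp'
            have hm := hA.2 p hmem
            rw [show c :: (y ++ [e]) = (c :: y) ++ [e] by simp] at hm
            refine mtch_of_append hm ?_
            have := htakecol i hik
            rw [hieq] at this
            simp only [List.length_cons]
            omega
          · exact (hBmtch p ((List.drop_sublist l B).subset hp')).1
      -- chain D in c :: (y ++ [e]) with all columns ≥ 1
      have hD : Chn x (c :: (y ++ [e])) (B.take l ++ A.drop k) := by
        constructor
        · rw [List.pairwise_append]
          refine ⟨List.Pairwise.sublist (List.take_sublist l B) hB,
                  List.Pairwise.sublist (List.drop_sublist k A) hA.1, ?_⟩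
          intro a ha b hb
          obtain ⟨j, hjlen, hjl, hjeq⟩ := hmem_takeB a ha
          obtain ⟨i, hilen, hieq⟩ := hmem_dropA b hb
          subst hjeq; subst hieq
          rcases hcond2 with hcase | hcase
          · omega
          · have h1 : R (B.getD j (0,0)) (A.getD k (0,0)) := by
              rcases Nat.lt_or_ge j (l-1) with hjl' | hjl'
              · exact R_trans (hBpwD j (l-1) hjl' (by omega)) hcase
              · have : j = l - 1 := by omega
                rw [this]; exact hcase
            rcases Nat.eq_zero_or_pos i with hi0 | hi0
            · rw [hi0]; exact h1
            · exact R_trans h1 (hApwD k (k+i) (by omega) hilen)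
        · intro p hp
          rcases List.mem_append.mp hp with hp' | hp'
          · exact (hBmtch p ((List.take_sublist l B).subset hp')).2
          · exact hA.2 p ((List.drop_sublist k A).subset hp')
      have hD1 : ∀ p ∈ B.take l ++ A.drop k, 1 ≤ p.2 := by
        intro p hp
        rcases List.mem_append.mp hp with hp' | hp'
        · exact (hBcol p ((List.take_sublist l B).subset hp')).1
        · obtain ⟨i, hilen, hieq⟩ := hmem_dropA p hp'
          rw [← hieq]
          exact hdropcol (k+i) hilen (by omega)
      have hD' : Chn x (y ++ [e]) ((B.take l ++ A.drop k).map fun p => (p.1, p.2 - 1)) := by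
        refine chn_map hD _ (fun a ha b hb hr => ?_) (fun q hq => ?_)
        · have := hD1 a ha; have := hD1 b hb
          exact ⟨hr.1, by have := hr.2; simp only; omega⟩
        · exact mtch_tail_right (hD.2 q hq) (hD1 q hq)
      have hlC := chn_length_le _ _ _ hC
      have hlD := chn_length_le _ _ _ hD'
      have hBlen : B.length = B0.length := by simp [hBdef]
      have hClen : (A.take k ++ B.drop l).length = k + (B.length - l) := by
        simp [List.length_take, List.length_drop]
        omega
      have hDlen : ((B.take l ++ A.drop k).map fun p => (p.1, p.2 - 1)).length
          = l + (A.length - k) := by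
        simp [List.length_take, List.length_drop]
        omega
      rw [hClen] at hlC
      rw [hDlen] at hlD
      omega

end SLU



namespace SLU
variable {α : Type*} [DecidableEq α]

theorem padded_length (m : ℕ) (b : List α) : (padded m b).length = 2*m + b.length := by
  simp [padded]; omega

theorem Hsem_col0 {a b : List α} {m n : ℕ} (ha : a.length = m) (hb : b.length = n)
    (i : ℕ) (hi : i ≤ m + n) : Hsem a b m i 0 = (m : ℤ) - i := by
  unfold Hsem
  by_cases h : i ≤ m
  · rw [if_pos (by omega)]
    have hsub : ((padded m b).drop i).take (0 + m - i) = List.replicate (m - i) none := by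
      rw [show padded m b
          = List.replicate m (none : Option α) ++ (b.map some ++ List.replicate m none) by
        rw [padded, List.append_assoc]]
      rw [List.drop_append_of_le_length (by simp; omega), List.drop_replicate]
      rw [show (0 + m - i) = m - i from by omega]
      exact List.take_left' (by simp)
    rw [hsub, wlcs_replicate, ha]
    have h2 : min m (m - i) = m - i := by omega
    rw [h2]
    omega
  · rw [if_neg (by omega)]
    push_cast; ring

theorem Hsem_rowN {a b : List α} {m n : ℕ} (ha : a.length = m) (hb : b.length = n)
    (j : ℕ) (hj : j ≤ m + n) : Hsem a b m (m+n) j = (j : ℤ) - n := by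
  unfold Hsem
  by_cases h : n ≤ j
  · rw [if_pos (by omega)]
    have hsub : ((padded m b).drop (m+n)).take (j + m - (m+n))
        = List.replicate (j - n) none := by
      rw [padded, List.drop_left' (by simp [hb])]
      rw [List.take_replicate]
      congr 1
      omega
    rw [hsub, wlcs_replicate, ha]
    have h2 : min m (j - n) = j - n := by omega
    rw [h2]
    omega
  · rw [if_neg (by omega)]
    push_cast; ring

theorem Hsem_row0 {a b : List α} {m n : ℕ} (ha : a.length = m) (hb : b.length = n)
    (j : ℕ) (hj : j ≤ m + n) : Hsem a b m 0 j = (m : ℤ) := by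
  unfold Hsem
  rw [if_pos (by omega)]
  have hsub : ((padded m b).drop 0).take (j + m - 0)
      = List.replicate m (none : Option α) ++ (b.map some ++ List.replicate m none).take j := by
    rw [List.drop_zero]
    rw [show padded m b
        = List.replicate m (none : Option α) ++ (b.map some ++ List.replicate m none) by
      rw [padded, List.append_assoc]]
    rw [show j + m - 0 = (List.replicate m (none : Option α)).length + j by simp; omega]
    exact List.take_length_add_append j
  rw [hsub]
  have hle : wlcs a (List.replicate m (none : Option α)
      ++ (b.map some ++ List.replicate m none).take j) ≤ m := by
    have := wlcs_le_left a (List.replicate m (none : Option α)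
      ++ (b.map some ++ List.replicate m none).take j)
    omega
  have hge : m ≤ wlcs a (List.replicate m (none : Option α)
      ++ (b.map some ++ List.replicate m none).take j) := by
    have h1 := wlcs_mono_append_right a (List.replicate m (none : Option α))
      ((b.map some ++ List.replicate m none).take j)
    rw [wlcs_replicate, ha] at h1
    omega
  omega

theorem Hsem_colN {a b : List α} {m n : ℕ} (ha : a.length = m) (hb : b.length = n)
    (i : ℕ) (hi : i ≤ m + n) : Hsem a b m i (m+n) = (m : ℤ) := by
  unfold Hsem
  rw [if_pos (by omega)]
  have hsub : ((padded m b).drop i).take (m + n + m - i) = (padded m b).drop i := by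
    apply List.take_of_length_le
    rw [List.length_drop, padded_length, hb]
    omega
  rw [hsub]
  have hle : wlcs a ((padded m b).drop i) ≤ m := by
    have := wlcs_le_left a ((padded m b).drop i); omega
  have hge : m ≤ wlcs a ((padded m b).drop i) := by
    have hdec : (padded m b).drop i
        = (List.replicate m (none : Option α) ++ b.map some).drop i
          ++ List.replicate m none := by
      rw [padded]
      exact List.drop_append_of_le_length (by simp [hb]; omega)
    rw [hdec]
    have h1 := wlcs_mono_prepend a ((List.replicate m (none : Option α) ++ b.map some).drop i)
      (List.replicate m (none : Option α))
    rw [wlcs_replicate, ha] at h1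
    omega
  omega

theorem Hsem_monge {a b : List α} {m n : ℕ} (ha : a.length = m) (hb : b.length = n)
    (p q : ℕ) (hp : p < m + n) (hq : q < m + n) :
    Hsem a b m p (q+1) + Hsem a b m (p+1) q
      ≤ Hsem a b m p q + Hsem a b m (p+1) (q+1) := by
  rcases Nat.lt_trichotomy p (q + m) with hcase | hcase | hcase
  · -- p + 1 ≤ q + m : all four are wlcs values
    have hsp : p < (padded m b).length := by rw [padded_length, hb]; omega
    have hts := List.drop_eq_getElem_cons hsp
    set s := padded m b with hs
    set c := s[p]'hsp with hc
    set t := s.drop (p+1) with ht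
    have htlen : t.length = 2*m + n - (p+1) := by
      rw [ht, List.length_drop, padded_length, hb]
    have hidx : q + m - p - 1 < t.length := by omega
    set y := t.take (q + m - p - 1) with hy
    set ee := t[q + m - p - 1]'hidx with hee
    have htk : t.take (q + m - p) = y ++ [ee] := by
      rw [show q + m - p = (q + m - p - 1) + 1 by omega, List.take_succ, hy]
      congr 1
      rw [List.getElem?_eq_getElem hidx, hee]
      rfl
    have h1 : (s.drop p).take (q + m - p) = c :: y := by
      rw [hts, show q + m - p = (q + m - p - 1) + 1 by omega, List.take_succ_cons]
    have h2 : (s.drop p).take (q + 1 + m - p) = c :: (y ++ [ee]) := by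
      rw [hts, show q + 1 + m - p = (q + m - p) + 1 by omega, List.take_succ_cons, htk]
    have h3 : t.take (q + m - (p+1)) = y := by
      rw [hy, show q + m - (p+1) = q + m - p - 1 by omega]
    have h4 : t.take (q + 1 + m - (p+1)) = y ++ [ee] := by
      rw [show q + 1 + m - (p+1) = q + m - p by omega, htk]
    have hkey := wlcs_cross a c ee y
    unfold Hsem
    rw [if_pos (by omega : p ≤ q + 1 + m), if_pos (by omega : p + 1 ≤ q + m),
        if_pos (by omega : p ≤ q + m), if_pos (by omega : p + 1 ≤ q + 1 + m)]
    rw [← hs, h2, h3, h1, h4]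
    push_cast
    omega
  · -- p = q + m
    unfold Hsem
    rw [if_pos (by omega : p ≤ q + 1 + m), if_neg (by omega : ¬ (p + 1 ≤ q + m)),
        if_pos (by omega : p ≤ q + m), if_pos (by omega : p + 1 ≤ q + 1 + m)]
    rw [show q + m - p = 0 by omega, show q + 1 + m - (p+1) = 0 by omega]
    simp only [List.take_zero, wlcs_nil_right]
    have hle1 : wlcs a (((padded m b).drop p).take (q + 1 + m - p)) ≤ 1 := by
      have h1 := wlcs_le_right a (((padded m b).drop p).take (q + 1 + m - p))
      have h2 : (((padded m b).drop p).take (q + 1 + m - p)).length ≤ 1 := by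
        rw [List.length_take]
        omega
      omega
    push_cast
    omega
  · -- p > q + m : linear region
    unfold Hsem
    rw [if_neg (by omega : ¬ (p ≤ q + m)), if_neg (by omega : ¬ (p + 1 ≤ q + m)),
        if_neg (by omega : ¬ (p + 1 ≤ q + 1 + m))]
    by_cases hp1 : p ≤ q + 1 + m
    · rw [if_pos hp1, show q + 1 + m - p = 0 by omega]
      simp only [List.take_zero, wlcs_nil_right]
      push_cast
      omega
    · rw [if_neg hp1]
      push_cast
      omega

end SLU



namespace SLU

theorem sum_Ico_telescope (f : ℕ → ℤ) (i N : ℕ) (h : i ≤ N) :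
    ∑ p ∈ Finset.Ico i N, (f p - f (p+1)) = f i - f N := by
  rw [Finset.sum_Ico_eq_sum_range]
  have h2 := Finset.sum_range_sub' (fun k => f (i + k)) (N - i)
  rw [show (∑ k ∈ Finset.range (N - i), (f (i + k) - f (i + k + 1)))
      = ∑ k ∈ Finset.range (N - i), (f (i + k) - f (i + (k + 1))) from
    Finset.sum_congr rfl (fun k _ => by rw [Nat.add_assoc])]
  rw [h2, Nat.add_zero, Nat.add_sub_cancel' h]

end SLU


/-- the semi-local score matrix is unit-anti-Monge: there is a
permutation matrix `P_{a,b}` over `⟨−m:n | 0:m+n⟩` (row indices shifted to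
`⟨0:m+n⟩`) with `H_{a,b}(i,j) = j − i − P_{a,b}^Σ(i,j)` for all
`i ∈ [−m:n]`, `j ∈ [0:m+n]`. -/
theorem semiLocal_unit_anti_monge {α : Type*} [DecidableEq α]
    (m n : ℕ) (a b : List α) (ha : a.length = m) (hb : b.length = n) :
    ∃ σ : Equiv.Perm (Fin (m + n)), ∀ i j : Fin (m + n + 1),
      Hsem a b m i j = (j : ℕ) + (m : ℤ) - (i : ℕ) - distSum (PermMat σ) i j := by
  classical
  open SLU in
  set N := m + n with hN
  set d : ℕ → ℕ → ℤ := fun i j => (j:ℤ) + m - i - Hsem a b m i j with hd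
  have hd_col0 : ∀ i, i ≤ N → d i 0 = 0 := by
    intro i hi; rw [hd]; simp only; rw [SLU.Hsem_col0 ha hb i hi]; push_cast; ring
  have hd_rowN : ∀ j, j ≤ N → d N j = 0 := by
    intro j hj; rw [hd]; simp only; rw [hN, SLU.Hsem_rowN ha hb j (by omega)]; push_cast; ring
  have hd_row0 : ∀ j, j ≤ N → d 0 j = j := by
    intro j hj; rw [hd]; simp only; rw [SLU.Hsem_row0 ha hb j hj]; push_cast; ring
  have hd_colN : ∀ i, i ≤ N → d i N = (N:ℤ) - i := by
    intro i hi; rw [hd]; simp only; rw [hN, SLU.Hsem_colN ha hb i (by omega)]; push_cast; ring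
  set DD : ℕ → ℕ → ℤ := fun p q => d p (q+1) + d (p+1) q - d p q - d (p+1) (q+1) with hDD
  have hDpos : ∀ p q, p < N → q < N → 0 ≤ DD p q := by
    intro p q hp hq
    have hmonge := SLU.Hsem_monge ha hb p q hp hq
    rw [hDD]; simp only; rw [hd]; simp only
    push_cast
    linarith
  have hinner : ∀ p j, ∑ q ∈ Finset.range j, DD p q
      = (d p j - d (p+1) j) - (d p 0 - d (p+1) 0) := by
    intro p j
    have h2 := Finset.sum_range_sub (fun q => d p q - d (p+1) q) j
    have h3 : ∀ q, DD p q = (d p (q+1) - d (p+1) (q+1)) - (d p q - d (p+1) q) := by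
      intro q; rw [hDD]; ring
    rw [Finset.sum_congr rfl (fun q _ => h3 q), h2]
    try ring
  have hDsum : ∀ i j, i ≤ N → j ≤ N →
      ∑ p ∈ Finset.Ico i N, ∑ q ∈ Finset.range j, DD p q = d i j := by
    intro i j hi hj
    rw [Finset.sum_congr rfl (fun p _ => hinner p j)]
    have h4 : ∀ p, (d p j - d (p+1) j) - (d p 0 - d (p+1) 0)
        = (d p j - d p 0) - (d (p+1) j - d (p+1) 0) := by intro p; ring
    rw [Finset.sum_congr rfl (fun p _ => h4 p)]
    rw [SLU.sum_Ico_telescope (fun p => d p j - d p 0) i N hi]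
    rw [hd_col0 i hi, hd_rowN j hj, hd_col0 N (le_refl N)]
    ring
  have hrow : ∀ p, p < N → ∑ q ∈ Finset.range N, DD p q = 1 := by
    intro p hp
    rw [hinner p N, hd_colN p (by omega), hd_colN (p+1) (by omega),
        hd_col0 p (by omega), hd_col0 (p+1) (by omega)]
    push_cast; ring
  have hcol : ∀ q, q < N → ∑ p ∈ Finset.range N, DD p q = 1 := by
    intro q hq
    have h5 : ∀ p, DD p q = (d p (q+1) - d p q) - (d (p+1) (q+1) - d (p+1) q) := by
      intro p; rw [hDD]; ring
    have h6 := Finset.sum_range_sub' (fun p => d p (q+1) - d p q) N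

    rw [Finset.sum_congr rfl (fun p _ => h5 p), h6]
    rw [hd_row0 (q+1) (by omega), hd_row0 q (by omega),
        hd_rowN (q+1) (by omega), hd_rowN q (by omega)]
    push_cast; ring
  have hex : ∀ p : Fin N, ∃ q : Fin N, 1 ≤ DD ↑p ↑q := by
    intro p
    by_contra hcon
    push_neg at hcon
    have hle : ∑ q ∈ Finset.range N, DD ↑p q ≤ 0 := by
      apply Finset.sum_nonpos
      intro q hq
      have := hcon ⟨q, Finset.mem_range.mp hq⟩
      simp only at this
      omega
    rw [hrow ↑p p.isLt] at hle
    omega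
  choose f hf using hex
  have hone : ∀ p : Fin N, DD ↑p ↑(f p) = 1 ∧ ∀ q : Fin N, q ≠ f p → DD ↑p ↑q = 0 := by
    intro p
    have hsum : ∑ q ∈ Finset.range N, DD ↑p q = 1 := hrow ↑p p.isLt
    rw [← Fin.sum_univ_eq_sum_range (fun q => DD ↑p q) N] at hsum
    have hsplit := Finset.add_sum_erase Finset.univ (fun q : Fin N => DD ↑p ↑q)
      (Finset.mem_univ (f p))
    have herase_nonneg : ∀ q ∈ Finset.univ.erase (f p), 0 ≤ DD ↑p ↑q :=
      fun q _ => hDpos _ _ p.isLt q.isLt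
    have hS := Finset.sum_nonneg herase_nonneg
    have h1 := hf p

    rw [hsum] at hsplit
    have herase : ∑ q ∈ Finset.univ.erase (f p), DD ↑p ↑q = 0 := by omega
    refine ⟨by omega, fun q hq => ?_⟩
    exact (Finset.sum_eq_zero_iff_of_nonneg herase_nonneg).mp herase q
      (Finset.mem_erase.mpr ⟨hq, Finset.mem_univ q⟩)
  have hinj : Function.Injective f := by
    intro p1 p2 hpe
    by_contra hne
    have hcolsum : ∑ p ∈ Finset.range N, DD p ↑(f p1) = 1 := hcol _ (f p1).isLt
    rw [← Fin.sum_univ_eq_sum_range (fun p => DD p ↑(f p1)) N] at hcolsum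
    have h2 : ∑ p ∈ ({p1, p2} : Finset (Fin N)), DD ↑p ↑(f p1)
        ≤ ∑ p ∈ (Finset.univ : Finset (Fin N)), DD ↑p ↑(f p1) :=
      Finset.sum_le_sum_of_subset_of_nonneg (Finset.subset_univ _)
        (fun p _ _ => hDpos _ _ p.isLt (f p1).isLt)
    rw [Finset.sum_pair hne] at h2
    have e1 := (hone p1).1
    have e2 := (hone p2).1
    rw [← hpe] at e2
    omega
  refine ⟨Equiv.ofBijective f (Finite.injective_iff_bijective.mp hinj), ?_⟩
  intro i j
  set σ := Equiv.ofBijective f (Finite.injective_iff_bijective.mp hinj) with hσ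
  have hPD : ∀ p q : Fin N, PermMat σ p q = DD ↑p ↑q := by
    intro p q
    unfold PermMat
    have hσp : σ p = f p := rfl
    by_cases hpq : σ p = q
    · rw [if_pos hpq]
      have hfq : f p = q := by rw [← hσp, hpq]
      rw [← hfq]
      exact ((hone p).1).symm
    · rw [if_neg hpq]
      refine (((hone p).2 q (fun h => hpq ?_)).symm)
      rw [hσp, ← h]
  have hiN : (i:ℕ) ≤ N := by omega
  have hjN : (j:ℕ) ≤ N := by omega
  unfold distSum
  rw [Finset.sum_congr rfl (fun p _ => Finset.sum_congr rfl (fun q _ => by rw [hPD p q]))]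
  have hstep1 : ∑ p : Fin N, ∑ q : Fin N,
      (if (i:ℕ) ≤ (p:ℕ) ∧ (q:ℕ) < (j:ℕ) then DD ↑p ↑q else 0)
      = ∑ p ∈ Finset.range N, ∑ q ∈ Finset.range N,
        (if (i:ℕ) ≤ p ∧ q < (j:ℕ) then DD p q else 0) := by
    rw [← Fin.sum_univ_eq_sum_range (fun p => ∑ q ∈ Finset.range N,
        (if (i:ℕ) ≤ p ∧ q < (j:ℕ) then DD p q else 0)) N]
    exact Finset.sum_congr rfl (fun p _ =>
      (Fin.sum_univ_eq_sum_range (fun q => if (i:ℕ) ≤ ↑p ∧ q < (j:ℕ) then DD ↑p q else 0) N))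
  rw [hstep1]
  have hstep2 : ∀ p : ℕ, ∑ q ∈ Finset.range N, (if (i:ℕ) ≤ p ∧ q < (j:ℕ) then DD p q else 0)
      = if (i:ℕ) ≤ p then ∑ q ∈ Finset.range (j:ℕ), DD p q else 0 := by
    intro p
    by_cases hip : (i:ℕ) ≤ p
    · rw [if_pos hip]
      simp only [hip, true_and]
      rw [← Finset.sum_filter]
      congr 1
      ext q
      simp only [Finset.mem_filter, Finset.mem_range]
      omega
    · rw [if_neg hip]
      simp [hip]
  rw [Finset.sum_congr rfl (fun p _ => hstep2 p)]
  rw [← Finset.sum_filter]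
  have hfilter : (Finset.range N).filter (fun p => (i:ℕ) ≤ p) = Finset.Ico (i:ℕ) N := by
    ext p
    simp only [Finset.mem_filter, Finset.mem_range, Finset.mem_Ico]
    omega
  rw [hfilter, hDsum (i:ℕ) (j:ℕ) hiN hjN, hd]
  ring
end

section
/- In the recursive step of fast implicit unit-Monge multiplication, the difference function δ(i,k) = Σ_{î<i, k̂<k} P_{C,hi}(î,k̂) − Σ_{î>i, k̂>k} P_{C,lo}(î,k̂) is unit-monotone increasing in each argument (each unit increment of i or k changes δ by 0 or +1), whenever P_{C,lo} and P_{C,hi} are subpermutation matrices over ⟨0:n | 0:n⟩ whose sum P_{C,lo} + P_{C,hi} is a permutation matrix. -/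
/-- A subpermutation matrix: a 0-1 matrix with at most one nonzero in
every row and every column. -/
def IsSubperm {n : ℕ} (P : Fin n → Fin n → ℤ) : Prop :=
  (∀ i j, P i j = 0 ∨ P i j = 1) ∧ (∀ i, ∑ j, P i j ≤ 1) ∧ (∀ j, ∑ i, P i j ≤ 1)

/-- The difference function
`δ(i,k) = Σ_{î<i, k̂<k} P_hi(î,k̂) − Σ_{î>i, k̂>k} P_lo(î,k̂)`
(sums over half-integers `î ∈ ⟨0:i⟩, k̂ ∈ ⟨0:k⟩` resp. `î ∈ ⟨i:n⟩, k̂ ∈ ⟨k:n⟩`). -/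
def delta {n : ℕ} (Plo Phi : Fin n → Fin n → ℤ) (i k : Fin (n+1)) : ℤ :=
  (∑ p : Fin n, ∑ q : Fin n, if (p : ℕ) < (i : ℕ) ∧ (q : ℕ) < (k : ℕ) then Phi p q else 0)
  - (∑ p : Fin n, ∑ q : Fin n, if (i : ℕ) ≤ (p : ℕ) ∧ (k : ℕ) ≤ (q : ℕ) then Plo p q else 0)

lemma delta_flip {n : ℕ} (Plo Phi : Fin n → Fin n → ℤ) (i k : Fin (n+1)) :
    delta (fun a b => Plo b a) (fun a b => Phi b a) k i = delta Plo Phi i k := by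
  unfold delta
  congr 1
  · rw [Finset.sum_comm]
    exact Finset.sum_congr rfl fun p _ => Finset.sum_congr rfl fun q _ =>
      if_congr (and_comm) rfl rfl
  · rw [Finset.sum_comm]
    exact Finset.sum_congr rfl fun p _ => Finset.sum_congr rfl fun q _ =>
      if_congr (and_comm) rfl rfl

lemma step_row {n : ℕ} (Plo Phi : Fin n → Fin n → ℤ)
    (hlo : IsSubperm Plo) (hhi : IsSubperm Phi)
    (hsum : ∃ σ : Equiv.Perm (Fin n), ∀ i j, Plo i j + Phi i j = PermMat σ i j)
    (i : Fin n) (k : Fin (n+1)) :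
    delta Plo Phi i.succ k - delta Plo Phi i.castSucc k ∈ ({0, 1} : Set ℤ) := by
  obtain ⟨σ, hσ⟩ := hsum
  have key : delta Plo Phi i.succ k - delta Plo Phi i.castSucc k
      = ∑ q : Fin n, ((if (q:ℕ) < (k:ℕ) then Phi i q else 0)
          + (if (k:ℕ) ≤ (q:ℕ) then Plo i q else 0)) := by
    unfold delta
    have h1 : ∀ p q : Fin n,
        (if (p:ℕ) < ((i.succ : Fin (n+1)):ℕ) ∧ (q:ℕ) < (k:ℕ) then Phi p q else 0)
        = (if (p:ℕ) < ((i.castSucc : Fin (n+1)):ℕ) ∧ (q:ℕ) < (k:ℕ) then Phi p q else 0)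
          + (if p = i then (if (q:ℕ) < (k:ℕ) then Phi i q else 0) else 0) := by
      intro p q
      simp only [Fin.val_succ, Fin.coe_castSucc]
      rcases lt_trichotomy (p:ℕ) (i:ℕ) with h|h|h
      · have : p ≠ i := fun e => by simp [e] at h
        simp [h, Nat.lt_succ_of_lt h, this]
      · have : p = i := Fin.ext h
        subst this
        simp [h, Nat.lt_irrefl]
      · have h2 : ¬ (p:ℕ) < (i:ℕ) + 1 := by omega
        have h3 : ¬ (p:ℕ) < (i:ℕ) := by omega
        have : p ≠ i := fun e => by simp [e] at h
        simp [h2, h3, this]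
    have h2 : ∀ p q : Fin n,
        (if ((i.castSucc : Fin (n+1)):ℕ) ≤ (p:ℕ) ∧ (k:ℕ) ≤ (q:ℕ) then Plo p q else 0)
        = (if ((i.succ : Fin (n+1)):ℕ) ≤ (p:ℕ) ∧ (k:ℕ) ≤ (q:ℕ) then Plo p q else 0)
          + (if p = i then (if (k:ℕ) ≤ (q:ℕ) then Plo i q else 0) else 0) := by
      intro p q
      simp only [Fin.val_succ, Fin.coe_castSucc]
      rcases lt_trichotomy (p:ℕ) (i:ℕ) with h|h|h
      · have : p ≠ i := fun e => by simp [e] at h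
        have hA : ¬ ((i:ℕ) ≤ (p:ℕ)) := by omega
        have hB : ¬ ((i:ℕ)+1 ≤ (p:ℕ)) := by omega
        simp [hA, hB, this]
      · have : p = i := Fin.ext h
        subst this
        have : ¬ ((p:ℕ)+1 ≤ (p:ℕ)) := by omega
        simp [this]
      · have : p ≠ i := fun e => by simp [e] at h
        simp [le_of_lt h, Nat.succ_le_of_lt h, this]
    simp only [h1, h2, Finset.sum_add_distrib, Finset.sum_ite_eq' Finset.univ]
    simp
    ring
  rw [key]
  set g : Fin n → ℤ := fun q => (if (q:ℕ) < (k:ℕ) then Phi i q else 0)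
          + (if (k:ℕ) ≤ (q:ℕ) then Plo i q else 0) with hg
  have hnn : ∀ q, 0 ≤ g q := by
    intro q
    have h1 := hhi.1 i q
    have h2 := hlo.1 i q
    simp only [hg]
    rcases lt_or_ge (q:ℕ) (k:ℕ) with h|h
    · simp [h, not_le_of_gt h]; omega
    · simp [h, not_lt_of_ge h]; omega
  have hub : ∀ q, g q ≤ Plo i q + Phi i q := by
    intro q
    have h1 := hhi.1 i q
    have h2 := hlo.1 i q
    simp only [hg]
    rcases lt_or_ge (q:ℕ) (k:ℕ) with h|h
    · simp [h, not_le_of_gt h]; omega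
    · simp [h, not_lt_of_ge h]; omega
  have hsum1 : ∑ q, (Plo i q + Phi i q) = 1 := by
    simp only [hσ, PermMat]
    simp
  have hle : ∑ q, g q ≤ 1 := by
    rw [← hsum1]; exact Finset.sum_le_sum fun q _ => hub q
  have hge : 0 ≤ ∑ q, g q := Finset.sum_nonneg fun q _ => hnn q
  have : ∑ q, g q = 0 ∨ ∑ q, g q = 1 := by omega
  rcases this with h|h <;> simp [h]

/-- whenever `P_lo`, `P_hi` are subpermutation matrices whose sum
is a permutation matrix, the function `δ` is unit-monotone increasing in each
argument: each unit increment of `i` or `k` changes `δ` by `0` or `+1`. -/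
theorem delta_unit_monotone {n : ℕ} (Plo Phi : Fin n → Fin n → ℤ)
    (hlo : IsSubperm Plo) (hhi : IsSubperm Phi)
    (hsum : ∃ σ : Equiv.Perm (Fin n), ∀ i j, Plo i j + Phi i j = PermMat σ i j) :
    (∀ (i : Fin n) (k : Fin (n+1)),
        delta Plo Phi i.succ k - delta Plo Phi i.castSucc k ∈ ({0, 1} : Set ℤ)) ∧
    (∀ (i : Fin (n+1)) (k : Fin n),
        delta Plo Phi i k.succ - delta Plo Phi i k.castSucc ∈ ({0, 1} : Set ℤ)) := by
  constructor
  · exact step_row Plo Phi hlo hhi hsum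
  · intro i k
    obtain ⟨σ, hσ⟩ := hsum
    have hlo' : IsSubperm (fun a b => Plo b a) := ⟨fun a b => hlo.1 b a, hlo.2.2, hlo.2.1⟩
    have hhi' : IsSubperm (fun a b => Phi b a) := ⟨fun a b => hhi.1 b a, hhi.2.2, hhi.2.1⟩
    have hsum' : ∃ τ : Equiv.Perm (Fin n), ∀ a b, Plo b a + Phi b a = PermMat τ a b := by
      refine ⟨σ⁻¹, fun a b => ?_⟩
      rw [hσ]
      simp only [PermMat]
      refine if_congr ⟨fun h => by rw [← h]; simp, fun h => by rw [← h]; simp⟩ rfl rfl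
    have h := step_row (fun a b => Plo b a) (fun a b => Phi b a) hlo' hhi' hsum' k i
    rw [← delta_flip Plo Phi i k.succ, ← delta_flip Plo Phi i k.castSucc]
    exact h
end
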